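/- arXiv:math/0701381 — 3 statements merged into one kernel-verified Lean document; each statement's English description precedes it below -/
import Mathlib

section
/- For a thick tree T with loops, the abstract structure of the sandpile group does not depend on the choice of sink: for any two vertices s and s', the sandpile groups of (T, s) and (T, s') are isomorphic; indeed both are isomorphic to the direct product, over all edges {i, j} of the underlying tree T', of the cyclic groups ℤ/e_{i,j}ℤ. -/
namespace SandpilePaper

variable {V : Type*} [Fintype V] [DecidableEq V]

/-- Configurations: assignments of numbers of grains to ordinary (non-sink) vertices. -/
abbrev Conf (s : V) : Type _ := {i : V // i ≠ s} → ℕ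

/-- The degree of a vertex: `deg i = ∑ j, e i j`. -/
def deg (e : V → V → ℕ) (i : V) : ℕ := ∑ j, e i j

/-- Toppling the (unstable) vertex `i`. -/
def toppleAt (e : V → V → ℕ) (s : V) (i : {i : V // i ≠ s}) (u : Conf s) : Conf s :=
  fun j => if j = i then u i - deg e i.1 + e i.1 i.1 else u j + e i.1 j.1

/-- One toppling step: some unstable vertex topples. -/
def Topple (e : V → V → ℕ) (s : V) (u v : Conf s) : Prop :=
  ∃ i : {i : V // i ≠ s}, deg e i.1 ≤ u i ∧ v = toppleAt e s i u

/-- A configuration is stable if every ordinary vertex has fewer grains than its degree. -/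
def Stable (e : V → V → ℕ) (s : V) (u : Conf s) : Prop :=
  ∀ j : {i : V // i ≠ s}, u j < deg e j.1

/-- The underlying simple graph: edges between distinct vertices with positive multiplicity. -/
def graph (e : V → V → ℕ) : SimpleGraph V := SimpleGraph.fromRel fun i j => 0 < e i j

/-- `σ` is a stabilization map: `σ u` is stable and reached from `u` by finitely many topplings. -/
def IsStabilization (e : V → V → ℕ) (s : V) (σ : Conf s → Conf s) : Prop :=
  ∀ u, Stable e s (σ u) ∧ Relation.ReflTransGen (Topple e s) u (σ u)

/-- A stable configuration `u` is recurrent if every configuration can reach it. -/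
def Recurrent (e : V → V → ℕ) (s : V) (σ : Conf s → Conf s) (u : Conf s) : Prop :=
  Stable e s u ∧ ∀ v : Conf s, ∃ w : Conf s, σ (v + w) = u

/-- Apply a sequence of topplings. -/
def applySeq (e : V → V → ℕ) (s : V) (u : Conf s) : List {i : V // i ≠ s} → Conf s
  | [] => u
  | i :: L => applySeq e s (toppleAt e s i u) L

/-- A toppling sequence is valid if each toppled vertex is unstable when toppled. -/
def ValidSeq (e : V → V → ℕ) (s : V) (u : Conf s) : List {i : V // i ≠ s} → Prop
  | [] => True
  | i :: L => deg e i.1 ≤ u i ∧ ValidSeq e s (toppleAt e s i u) L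

/-- `succeq e s i j` means `i ⪰ j`: `j` lies on the unique path from `i` to the sink `s`. -/
def succeq (e : V → V → ℕ) (s i j : V) : Prop :=
  (graph e).dist i s = (graph e).dist i j + (graph e).dist j s

noncomputable instance (e : V → V → ℕ) (s i j : V) : Decidable (succeq e s i j) := Nat.decEq _ _

/-- `p` assigns to each ordinary vertex its parent: its neighbor on the path to the sink. -/
def IsParent (e : V → V → ℕ) (s : V) (p : {i : V // i ≠ s} → V) : Prop :=
  ∀ j : {i : V // i ≠ s}, (graph e).Adj j.1 (p j) ∧
    (graph e).dist (p j) s + 1 = (graph e).dist j.1 s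

/-- The set `{i : i ⪰ j}`. -/
noncomputable def descendants (e : V → V → ℕ) (s : V) (j : {i : V // i ≠ s}) :
    Finset {i : V // i ≠ s} :=
  Finset.univ.filter fun i => succeq e s i.1 j.1

/-- The set `{i : i ≻ j}`. -/
noncomputable def strictDescendants (e : V → V → ℕ) (s : V) (j : {i : V // i ≠ s}) :
    Finset {i : V // i ≠ s} :=
  Finset.univ.filter fun i => i ≠ j ∧ succeq e s i.1 j.1

/-- `j` is a leaf: its parent is its only neighbor in the underlying tree. -/
def IsLeaf (e : V → V → ℕ) (s : V) (p : {i : V // i ≠ s} → V) (j : {i : V // i ≠ s}) : Prop :=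
  ∀ k : V, (graph e).Adj j.1 k → k = p j

/-- Rows of the toppling matrix `Δ`. -/
def deltaRow (e : V → V → ℕ) (s : V) (i j : {i : V // i ≠ s}) : ℤ :=
  if i = j then (deg e i.1 : ℤ) - (e i.1 i.1 : ℤ) else -(e i.1 j.1 : ℤ)

/-- The lattice `Λ` spanned by the rows of the toppling matrix. -/
def lattice (e : V → V → ℕ) (s : V) : AddSubgroup ({i : V // i ≠ s} → ℤ) :=
  AddSubgroup.closure (Set.range (deltaRow e s))

/-- The map `φ(u)_j = ∑_{i ⪰ j} u_i (mod e_{j,p(j)})`. -/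
noncomputable def phi (e : V → V → ℕ) (s : V) (p : {i : V // i ≠ s} → V) (u : Conf s)
    (j : {i : V // i ≠ s}) : ZMod (e j.1 (p j)) :=
  ∑ i ∈ descendants e s j, (u i : ZMod (e j.1 (p j)))

/-- The map `φ` on integer vectors. -/
noncomputable def phiZ (e : V → V → ℕ) (s : V) (p : {i : V // i ≠ s} → V) (u : {i : V // i ≠ s} → ℤ)
    (j : {i : V // i ≠ s}) : ZMod (e j.1 (p j)) :=
  ∑ i ∈ descendants e s j, (u i : ZMod (e j.1 (p j)))


section Dynamics

set_option linter.unusedSectionVars false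

variable (e : V → V → ℕ) (s : V)

lemma toppleAt_ne {u : Conf s} {i j : {i : V // i ≠ s}} (h : j ≠ i) :
    toppleAt e s i u j = u j + e i.1 j.1 := if_neg h

lemma toppleAt_self {u : Conf s} {i : {i : V // i ≠ s}} :
    toppleAt e s i u i = u i - deg e i.1 + e i.1 i.1 := if_pos rfl

lemma applySeq_nil (u : Conf s) : applySeq e s u [] = u := rfl

lemma applySeq_append (u : Conf s) (L1 L2 : List {i : V // i ≠ s}) :
    applySeq e s u (L1 ++ L2) = applySeq e s (applySeq e s u L1) L2 := by
  induction L1 generalizing u with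
  | nil => rfl
  | cons a L ih => simp [applySeq, ih]

lemma validSeq_append {u : Conf s} {L1 L2 : List {i : V // i ≠ s}} :
    ValidSeq e s u (L1 ++ L2) ↔ ValidSeq e s u L1 ∧ ValidSeq e s (applySeq e s u L1) L2 := by
  induction L1 generalizing u with
  | nil => simp [ValidSeq, applySeq]
  | cons a L ih => simp [ValidSeq, applySeq, ih, and_assoc]

lemma toppleAt_comm {u : Conf s} {i i' : {i : V // i ≠ s}} (hi : deg e i.1 ≤ u i)
    (hi' : deg e i'.1 ≤ u i') (hne : i ≠ i') :
    toppleAt e s i (toppleAt e s i' u) = toppleAt e s i' (toppleAt e s i u) := by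
  funext j
  rcases eq_or_ne j i with rfl | hji
  · have lA : toppleAt e s j (toppleAt e s i' u) j = (u j + e i'.1 j.1) - deg e j.1 + e j.1 j.1 := by
      rw [toppleAt_self, toppleAt_ne e s hne]
    have lB : toppleAt e s i' (toppleAt e s j u) j = (u j - deg e j.1 + e j.1 j.1) + e i'.1 j.1 := by
      rw [toppleAt_ne e s hne, toppleAt_self]
    rw [lA, lB]
    omega
  · rcases eq_or_ne j i' with rfl | hji'
    · have lA : toppleAt e s i (toppleAt e s j u) j = (u j - deg e j.1 + e j.1 j.1) + e i.1 j.1 := by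
        rw [toppleAt_ne e s (Ne.symm hne), toppleAt_self]
      have lB : toppleAt e s j (toppleAt e s i u) j = (u j + e i.1 j.1) - deg e j.1 + e j.1 j.1 := by
        rw [toppleAt_self, toppleAt_ne e s (Ne.symm hne)]
      rw [lA, lB]
      omega
    · have lA : toppleAt e s i (toppleAt e s i' u) j = (u j + e i'.1 j.1) + e i.1 j.1 := by
        rw [toppleAt_ne e s hji, toppleAt_ne e s hji']
      have lB : toppleAt e s i' (toppleAt e s i u) j = (u j + e i.1 j.1) + e i'.1 j.1 := by
        rw [toppleAt_ne e s hji', toppleAt_ne e s hji]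
      rw [lA, lB]
      omega

lemma le_toppleAt {u : Conf s} {i j : {i : V // i ≠ s}} (h : j ≠ i) :
    u j ≤ toppleAt e s i u j := by rw [toppleAt_ne e s h]; omega

/-- Strip/exchange lemma. -/
lemma exchange {i : {i : V // i ≠ s}} :
    ∀ (L : List {i : V // i ≠ s}) (u z : Conf s), deg e i.1 ≤ u i → ValidSeq e s u L →
      applySeq e s u L = z → Stable e s z →
      ∃ L', L.length = L'.length + 1 ∧ ValidSeq e s (toppleAt e s i u) L' ∧
        applySeq e s (toppleAt e s i u) L' = z := by
  intro L
  induction L with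
  | nil =>
    intro u z hi _ happ hz
    rw [applySeq_nil] at happ
    subst happ
    exact absurd (hz i) (by omega)
  | cons a L ih =>
    intro u z hi hval happ hz
    rcases eq_or_ne a i with rfl | hne
    · exact ⟨L, rfl, hval.2, happ⟩
    · have hi2 : deg e i.1 ≤ toppleAt e s a u i := le_trans hi (le_toppleAt e s (Ne.symm hne))
      obtain ⟨L2, hlen, hv2, ha2⟩ := ih (toppleAt e s a u) z hi2 hval.2 happ hz
      refine ⟨a :: L2, by simp [hlen], ⟨le_trans hval.1 (le_toppleAt e s hne), ?_⟩, ?_⟩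
      · rwa [toppleAt_comm e s hi hval.1 (Ne.symm hne)] at hv2
      · show applySeq e s (toppleAt e s a (toppleAt e s i u)) L2 = z
        rwa [toppleAt_comm e s hi hval.1 (Ne.symm hne)] at ha2

lemma stable_unique :
    ∀ (L1 : List {i : V // i ≠ s}) (u : Conf s) (L2 : List {i : V // i ≠ s}) (z1 z2 : Conf s),
      ValidSeq e s u L1 → applySeq e s u L1 = z1 → Stable e s z1 →
      ValidSeq e s u L2 → applySeq e s u L2 = z2 → Stable e s z2 → z1 = z2 := by
  intro L1
  induction L1 with
  | nil =>
    intro u L2 z1 z2 _ h1 hs1 hv2 h2 hs2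
    rw [applySeq_nil] at h1
    subst h1
    cases L2 with
    | nil => rw [← h2, applySeq_nil]
    | cons a L => exact absurd (hs1 a) (by have := hv2.1; omega)
  | cons a L1' ih =>
    intro u L2 z1 z2 hv1 h1 hs1 hv2 h2 hs2
    obtain ⟨L2', _, hv2', h2'⟩ := exchange e s L2 u z2 hv1.1 hv2 h2 hs2
    exact ih (toppleAt e s a u) L2' z1 z2 hv1.2 h1 hs1 hv2' h2' hs2

/-- `u` reaches `z` by a valid toppling sequence. -/
def Reaches (u z : Conf s) : Prop :=
  ∃ L, ValidSeq e s u L ∧ applySeq e s u L = z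

lemma reaches_refl (u : Conf s) : Reaches e s u u := ⟨[], trivial, rfl⟩

lemma reaches_trans {u v w : Conf s} (h1 : Reaches e s u v) (h2 : Reaches e s v w) :
    Reaches e s u w := by
  obtain ⟨L1, hv1, h1⟩ := h1
  obtain ⟨L2, hv2, h2⟩ := h2
  exact ⟨L1 ++ L2, (validSeq_append e s).2 ⟨hv1, by rw [h1]; exact hv2⟩,
    by rw [applySeq_append, h1, h2]⟩

lemma reaches_of_reflTransGen {u z : Conf s} (h : Relation.ReflTransGen (Topple e s) u z) :
    Reaches e s u z := by
  induction h with
  | refl => exact reaches_refl e s u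
  | tail _ hstep ih =>
    obtain ⟨i, hi, rfl⟩ := hstep
    exact reaches_trans e s ih ⟨[i], ⟨hi, trivial⟩, rfl⟩

lemma eq_of_reaches_stable {u z1 z2 : Conf s} (h1 : Reaches e s u z1) (hs1 : Stable e s z1)
    (h2 : Reaches e s u z2) (hs2 : Stable e s z2) : z1 = z2 := by
  obtain ⟨L1, hv1, h1⟩ := h1
  obtain ⟨L2, hv2, h2⟩ := h2
  exact stable_unique e s L1 u L2 z1 z2 hv1 h1 hs1 hv2 h2 hs2

variable {σ : Conf s → Conf s}

lemma sigma_reaches (hσ : IsStabilization e s σ) (u : Conf s) : Reaches e s u (σ u) :=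
  reaches_of_reflTransGen e s (hσ u).2

lemma sigma_eq_of_reaches (hσ : IsStabilization e s σ) {u z : Conf s} (h : Reaches e s u z)
    (hz : Stable e s z) : σ u = z :=
  eq_of_reaches_stable e s (sigma_reaches e s hσ u) (hσ u).1 h hz

lemma sigma_of_stable (hσ : IsStabilization e s σ) {u : Conf s} (h : Stable e s u) : σ u = u :=
  sigma_eq_of_reaches e s hσ (reaches_refl e s u) h

lemma toppleAt_add {u w : Conf s} {i : {i : V // i ≠ s}} (hi : deg e i.1 ≤ u i) :
    toppleAt e s i (u + w) = toppleAt e s i u + w := by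
  funext j
  show toppleAt e s i (u + w) j = toppleAt e s i u j + w j
  rcases eq_or_ne j i with rfl | hj
  · rw [toppleAt_self, toppleAt_self]
    have h1 : (u + w) j = u j + w j := rfl
    omega
  · rw [toppleAt_ne e s hj, toppleAt_ne e s hj]
    have h1 : (u + w) j = u j + w j := rfl
    omega

lemma applySeq_add (w : Conf s) :
    ∀ (L : List {i : V // i ≠ s}) (u : Conf s), ValidSeq e s u L →
      ValidSeq e s (u + w) L ∧ applySeq e s (u + w) L = applySeq e s u L + w := by
  intro L
  induction L with
  | nil => intro u _; exact ⟨trivial, rfl⟩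
  | cons a L ih =>
    intro u hv
    have h1 : deg e a.1 ≤ (u + w) a := le_trans hv.1 (by show u a ≤ u a + w a; omega)
    have h2 := ih (toppleAt e s a u) hv.2
    rw [← toppleAt_add e s hv.1] at h2
    exact ⟨⟨h1, h2.1⟩, h2.2⟩

lemma reaches_add {u z : Conf s} (w : Conf s) (h : Reaches e s u z) :
    Reaches e s (u + w) (z + w) := by
  obtain ⟨L, hv, happ⟩ := h
  obtain ⟨h1, h2⟩ := applySeq_add e s w L u hv
  exact ⟨L, h1, by rw [h2, happ]⟩

lemma sigma_add_sigma (hσ : IsStabilization e s σ) (u w : Conf s) :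
    σ (u + w) = σ (σ u + w) := by
  refine sigma_eq_of_reaches e s hσ ?_ (hσ _).1
  exact reaches_trans e s (reaches_add e s w (sigma_reaches e s hσ u))
    (sigma_reaches e s hσ _)

lemma recurrent_sigma_add (hσ : IsStabilization e s σ) {u : Conf s}
    (hu : Recurrent e s σ u) (v : Conf s) : Recurrent e s σ (σ (u + v)) := by
  refine ⟨(hσ _).1, fun x => ?_⟩
  obtain ⟨w1, hw1⟩ := hu.2 x
  refine ⟨w1 + v, ?_⟩
  rw [← add_assoc, sigma_add_sigma e s hσ, hw1]

lemma applySeq_of_not_mem {i : {i : V // i ≠ s}} :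
    ∀ (L : List {i : V // i ≠ s}) (u : Conf s), i ∉ L →
      applySeq e s u L i = u i + (L.map fun k => e k.1 i.1).sum := by
  intro L
  induction L with
  | nil => intro u _; simp [applySeq]
  | cons a L ih =>
    intro u hmem
    have hia : i ≠ a := fun h => hmem (h ▸ (List.mem_cons_self (a := a) (l := L)))
    have := ih (toppleAt e s a u) (fun h => hmem (List.mem_cons_of_mem a h))
    rw [applySeq, this, toppleAt_ne e s hia]
    simp; omega

lemma mem_of_deg_le {i : {i : V // i ≠ s}} {L : List {i : V // i ≠ s}} {u z : Conf s}
    (hi : deg e i.1 ≤ u i) (happ : applySeq e s u L = z) (hz : Stable e s z) : i ∈ L := by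
  by_contra hmem
  have h2 := applySeq_of_not_mem e s L u hmem
  rw [happ] at h2
  have := hz i
  omega

lemma list_last_split {α : Type*} {a : α} :
    ∀ {L : List α}, a ∈ L → ∃ P Q, L = P ++ a :: Q ∧ a ∉ Q := by
  intro L
  induction L with
  | nil => intro h; cases h
  | cons x L ih =>
    intro h
    by_cases hx : a ∈ L
    · obtain ⟨P, Q, rfl, hQ⟩ := ih hx
      exact ⟨x :: P, Q, rfl, hQ⟩
    · have hax : a = x := by
        rcases List.mem_cons.1 h with h | h
        · exact h
        · exact absurd h hx
      subst hax
      exact ⟨[], L, rfl, hx⟩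

lemma scan_last :
    ∀ (n : ℕ) (L : List {i : V // i ≠ s}) (A : Finset {i : V // i ≠ s}), L.length ≤ n →
      A.Nonempty → (∀ a ∈ A, a ∈ L) →
      ∃ (j' : {i : V // i ≠ s}) (P Q : List {i : V // i ≠ s}),
        L = P ++ j' :: Q ∧ j' ∈ A ∧ j' ∉ Q ∧ ∀ k ∈ A, k ≠ j' → k ∈ Q := by
  intro n
  induction n with
  | zero =>
    rintro L A hlen ⟨a, ha⟩ hmem
    have := hmem a ha
    rw [Nat.le_zero, List.length_eq_zero_iff] at hlen
    subst hlen
    cases this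
  | succ n ih =>
    rintro L A hlen ⟨a, ha⟩ hmem
    obtain ⟨P, Q, rfl, hQ⟩ := list_last_split (hmem a ha)
    by_cases hall : ∀ k ∈ A, k ≠ a → k ∈ Q
    · exact ⟨a, P, Q, rfl, ha, hQ, hall⟩
    · push_neg at hall
      obtain ⟨b, hbA, hba, hbQ⟩ := hall
      classical
      set A1 := A.filter (fun x => x ∉ (a :: Q)) with hA1
      have hA1mem : ∀ x ∈ A1, x ∈ P := by
        intro x hx
        rw [hA1, Finset.mem_filter] at hx
        rcases List.mem_append.1 (hmem x hx.1) with h | h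
        · exact h
        · exact absurd h hx.2
      have hA1ne : A1.Nonempty := by
        refine ⟨b, ?_⟩
        rw [hA1, Finset.mem_filter]
        exact ⟨hbA, by simp [List.mem_cons, hba, hbQ]⟩
      have hlenP : P.length ≤ n := by
        have := hlen
        simp only [List.length_append, List.length_cons] at this
        omega
      obtain ⟨j', P2, Q2, hP, hj'A1, hj'Q2, hforall⟩ := ih P A1 hlenP hA1ne hA1mem
      have hj'A : j' ∈ A := (Finset.mem_filter.1 hj'A1).1
      have hj'notaQ : j' ∉ (a :: Q) := (Finset.mem_filter.1 hj'A1).2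
      refine ⟨j', P2, Q2 ++ a :: Q, by simp [hP], hj'A, ?_, ?_⟩
      · intro hc
        rcases List.mem_append.1 hc with h | h
        · exact hj'Q2 h
        · exact hj'notaQ h
      · intro k hk hkj'
        by_cases hkaQ : k ∈ a :: Q
        · exact List.mem_append.2 (Or.inr hkaQ)
        · have hkA1 : k ∈ A1 := by
            rw [hA1, Finset.mem_filter]; exact ⟨hk, hkaQ⟩
          exact List.mem_append.2 (Or.inl (hforall k hkA1 hkj'))

lemma finset_sum_le_list_sum (f : {i : V // i ≠ s} → ℕ) :
    ∀ (L : List {i : V // i ≠ s}) (S : Finset {i : V // i ≠ s}), (∀ x ∈ S, x ∈ L) →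
      ∑ x ∈ S, f x ≤ (L.map f).sum := by
  intro L
  induction L with
  | nil =>
    intro S hS
    have : S = ∅ := Finset.eq_empty_of_forall_notMem (fun x hx => by cases hS x hx)
    simp [this]
  | cons q L ih =>
    intro S hS
    have hsub : ∀ x ∈ S.erase q, x ∈ L := by
      intro x hx
      have hxq := Finset.ne_of_mem_erase hx
      rcases List.mem_cons.1 (hS x (Finset.mem_of_mem_erase hx)) with h | h
      · exact absurd h hxq
      · exact h
    have hle := ih (S.erase q) hsub
    by_cases hq : q ∈ S
    · rw [← Finset.add_sum_erase S f hq]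
      simp only [List.map_cons, List.sum_cons]
      omega
    · rw [Finset.erase_eq_of_notMem hq] at hle
      simp only [List.map_cons, List.sum_cons]
      omega

end Dynamics
section Geometry
set_option linter.unusedSectionVars false

open SimpleGraph

variable {e : V → V → ℕ}

lemma graph_adj (hsym : ∀ i j : V, e i j = e j i) {x y : V} : (graph e).Adj x y ↔ x ≠ y ∧ 0 < e x y := by
  rw [graph, SimpleGraph.fromRel_adj]
  constructor
  · rintro ⟨hne, h | h⟩
    · exact ⟨hne, h⟩
    · exact ⟨hne, hsym x y ▸ h⟩
  · rintro ⟨hne, h⟩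
    exact ⟨hne, Or.inl h⟩

lemma dist_mem_walk (htree : (graph e).IsTree) {x y z : V} (w : (graph e).Walk y z) (hw : w.length = (graph e).dist y z)
    (hx : x ∈ w.support) :
    (graph e).dist y x + (graph e).dist x z = (graph e).dist y z := by
  have hconn := htree.isConnected
  have hsplit := w.take_spec hx
  have hlen : (w.takeUntil x hx).length + (w.dropUntil x hx).length = w.length := by
    rw [← SimpleGraph.Walk.length_append, hsplit]
  have h1 : (graph e).dist y x ≤ (w.takeUntil x hx).length := SimpleGraph.dist_le _
  have h2 : (graph e).dist x z ≤ (w.dropUntil x hx).length := SimpleGraph.dist_le _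
  have h3 : (graph e).dist y z ≤ (graph e).dist y x + (graph e).dist x z :=
    hconn.dist_triangle
  omega

lemma exists_toward (htree : (graph e).IsTree) {x y : V} (h : x ≠ y) :
    ∃ q, (graph e).Adj x q ∧ (graph e).dist q y + 1 = (graph e).dist x y := by
  have hconn := htree.isConnected
  obtain ⟨w, hw⟩ := (hconn x y).exists_walk_length_eq_dist
  have hpos : 0 < (graph e).dist x y := hconn.pos_dist_of_ne h
  cases w with
  | nil => rw [← hw] at hpos; simp at hpos
  | @cons _ b _ hadj w' =>
    refine ⟨b, hadj, ?_⟩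
    have h1 : (graph e).dist b y ≤ w'.length := SimpleGraph.dist_le _
    have h2 : (graph e).dist x y ≤ 1 + (graph e).dist b y := by
      obtain ⟨w2, hw2⟩ := (hconn b y).exists_walk_length_eq_dist
      have := SimpleGraph.dist_le (SimpleGraph.Walk.cons hadj w2)
      rw [SimpleGraph.Walk.length_cons, hw2] at this
      omega
    have h3 : w'.length + 1 = (graph e).dist x y := by
      rw [← hw, SimpleGraph.Walk.length_cons]
    omega

lemma closer_unique (htree : (graph e).IsTree) {j k1 k2 y : V} (hj : j ≠ y) (h1 : (graph e).Adj j k1)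
    (h2 : (graph e).Adj j k2) (hd1 : (graph e).dist k1 y + 1 = (graph e).dist j y)
    (hd2 : (graph e).dist k2 y + 1 = (graph e).dist j y) : k1 = k2 := by
  have hconn := htree.isConnected
  obtain ⟨P1, hP1path, hP1len⟩ := (hconn k1 y).exists_path_of_dist
  obtain ⟨P2, hP2path, hP2len⟩ := (hconn k2 y).exists_path_of_dist
  have hjd : 0 < (graph e).dist j y := hconn.pos_dist_of_ne hj
  have hj1 : j ∉ P1.support := by
    intro hmem
    have := dist_mem_walk htree P1 hP1len hmem
    have h4 : 0 < (graph e).dist j k1 := hconn.pos_dist_of_ne h1.ne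
    have h5 : (graph e).dist k1 j = (graph e).dist j k1 := SimpleGraph.dist_comm
    omega
  have hj2 : j ∉ P2.support := by
    intro hmem
    have := dist_mem_walk htree P2 hP2len hmem
    have h4 : 0 < (graph e).dist j k2 := hconn.pos_dist_of_ne h2.ne
    have h5 : (graph e).dist k2 j = (graph e).dist j k2 := SimpleGraph.dist_comm
    omega
  have hQ1 : (SimpleGraph.Walk.cons h1 P1).IsPath := hP1path.cons hj1
  have hQ2 : (SimpleGraph.Walk.cons h2 P2).IsPath := hP2path.cons hj2
  obtain ⟨p, -, hup⟩ := htree.existsUnique_path j y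
  have heq : SimpleGraph.Walk.cons h1 P1 = SimpleGraph.Walk.cons h2 P2 := by
    rw [hup _ hQ1, hup _ hQ2]
  have hsupp := congrArg SimpleGraph.Walk.support heq
  rw [SimpleGraph.Walk.support_cons, SimpleGraph.Walk.support_cons,
    P1.support_eq_cons, P2.support_eq_cons] at hsupp
  simp only [List.cons.injEq] at hsupp
  exact hsupp.2.1

lemma adj_dist_cases (htree : (graph e).IsTree) {x y t : V} (h : (graph e).Adj x y) :
    (graph e).dist x t = (graph e).dist y t + 1 ∨ (graph e).dist y t = (graph e).dist x t + 1 := by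
  have hconn := htree.isConnected
  have hxy : (graph e).dist x y = 1 := SimpleGraph.dist_eq_one_iff_adj.2 h
  have tri1 : (graph e).dist x t ≤ (graph e).dist x y + (graph e).dist y t := hconn.dist_triangle
  have tri2 : (graph e).dist y t ≤ (graph e).dist y x + (graph e).dist x t := hconn.dist_triangle
  have hyx : (graph e).dist y x = 1 := by rwa [SimpleGraph.dist_comm] at hxy
  rw [hyx] at tri2
  by_contra hcon
  push_neg at hcon
  have hne : (graph e).dist x t = (graph e).dist y t := by omega
  -- derive contradiction: equal distances for adjacent vertices in a tree
  rcases eq_or_ne x t with rfl | hxt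
  · rw [SimpleGraph.dist_self] at hne
    have : y = x := hconn.dist_eq_zero_iff.1 hne.symm
    exact h.ne' this
  · have hyt : y ≠ t := by
      rintro rfl
      rw [SimpleGraph.dist_self] at hne
      exact hxt (hconn.dist_eq_zero_iff.1 hne)
    obtain ⟨Py, hPypath, hPylen⟩ := (hconn y t).exists_path_of_dist
    have hxPy : x ∉ Py.support := by
      intro hmem
      have := dist_mem_walk htree Py hPylen hmem
      have h4 : 0 < (graph e).dist y x := hconn.pos_dist_of_ne h.ne'
      omega
    obtain ⟨Px, hPxpath, hPxlen⟩ := (hconn x t).exists_path_of_dist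
    have hQ : (SimpleGraph.Walk.cons h Py).IsPath := hPypath.cons hxPy
    obtain ⟨p, -, hup⟩ := htree.existsUnique_path x t
    have heq : SimpleGraph.Walk.cons h Py = Px := by rw [hup _ hQ, hup _ hPxpath]
    have := congrArg SimpleGraph.Walk.length heq
    rw [SimpleGraph.Walk.length_cons, hPylen, hPxlen] at this
    omega

/-- The parent of an ordinary vertex. -/
noncomputable def par (htree : (graph e).IsTree) (s : V) (j : {i : V // i ≠ s}) : V :=
  Classical.choose (exists_toward htree j.2)

lemma par_adj (htree : (graph e).IsTree) (s : V) (j : {i : V // i ≠ s}) : (graph e).Adj j.1 (par htree s j) :=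
  (Classical.choose_spec (exists_toward htree j.2)).1

lemma par_dist (htree : (graph e).IsTree) (s : V) (j : {i : V // i ≠ s}) :
    (graph e).dist (par htree s j) s + 1 = (graph e).dist j.1 s :=
  (Classical.choose_spec (exists_toward htree j.2)).2

lemma c_pos (hsym : ∀ i j : V, e i j = e j i) (htree : (graph e).IsTree) (s : V) (j : {i : V // i ≠ s}) : 0 < e j.1 (par htree s j) :=
  ((graph_adj hsym (x := j.1)).1 (par_adj htree s j)).2

lemma dist_pos (htree : (graph e).IsTree) (s : V) (j : {i : V // i ≠ s}) : 0 < (graph e).dist j.1 s :=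
  htree.isConnected.pos_dist_of_ne j.2

lemma c_le_deg (htree : (graph e).IsTree) (s : V) (j : {i : V // i ≠ s}) : e j.1 (par htree s j) ≤ deg e j.1 :=
  Finset.single_le_sum (f := fun k => e j.1 k) (fun _ _ => Nat.zero_le _) (Finset.mem_univ _)

/-- Dichotomy for neighbours of an ordinary vertex. -/
lemma adj_cases (htree : (graph e).IsTree) {s : V} {j : {i : V // i ≠ s}} {k : V} (h : (graph e).Adj j.1 k) :
    k = par htree s j ∨ (succeq e s k j.1 ∧ k ≠ s ∧
      (graph e).dist k s = (graph e).dist j.1 s + 1) := by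
  rcases adj_dist_cases htree (t := s) h with hc | hc
  · -- dist j s = dist k s + 1 : k is the parent
    left
    exact closer_unique htree j.2 h (par_adj htree s j) hc.symm (par_dist htree s j)
  · -- dist k s = dist j s + 1
    right
    have hkj : (graph e).dist k j.1 = 1 := SimpleGraph.dist_eq_one_iff_adj.2 h.symm
    have hks : k ≠ s := by
      intro hks
      subst hks
      rw [SimpleGraph.dist_self] at hc
      omega
    exact ⟨by rw [succeq, hc, hkj]; omega, hks, hc⟩

lemma succeq_refl (s j : V) : succeq e s j j := by
  rw [succeq, SimpleGraph.dist_self]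
  omega

lemma succeq_trans (htree : (graph e).IsTree) {s i j k : V} (h1 : succeq e s i j) (h2 : succeq e s j k) : succeq e s i k := by
  have hconn := htree.isConnected
  rw [succeq] at *
  have t1 : (graph e).dist i s ≤ (graph e).dist i k + (graph e).dist k s := hconn.dist_triangle
  have t2 : (graph e).dist i k ≤ (graph e).dist i j + (graph e).dist j k := hconn.dist_triangle
  omega

lemma succeq_antisymm (htree : (graph e).IsTree) {s i j : V} (h1 : succeq e s i j) (h2 : succeq e s j i) : i = j := by
  have hconn := htree.isConnected
  rw [succeq] at *
  by_contra hne
  have hpos := hconn.pos_dist_of_ne hne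
  have hcomm : (graph e).dist i j = (graph e).dist j i := SimpleGraph.dist_comm
  omega

lemma dist_lt_of_succeq_ne (htree : (graph e).IsTree) {s i j : V} (h : succeq e s i j) (hne : i ≠ j) :
    (graph e).dist j s < (graph e).dist i s := by
  rw [succeq] at h
  have := htree.isConnected.pos_dist_of_ne hne
  omega

/-- If `i ≻ j` strictly then the parent of `i` still satisfies `par i ⪰ j`, and `par i ≠ s`. -/
lemma par_succeq (htree : (graph e).IsTree) {s : V} {i j : {i : V // i ≠ s}} (hij : succeq e s i.1 j.1) (hne : i.1 ≠ j.1) :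
    par htree s i ≠ s ∧ succeq e s (par htree s i) j.1 := by
  have hconn := htree.isConnected
  obtain ⟨q, hq_adj, hq_dist⟩ := exists_toward htree (x := i.1) (y := j.1) hne
  have hqs : (graph e).dist q s ≤ (graph e).dist q j.1 + (graph e).dist j.1 s :=
    hconn.dist_triangle
  have hiq : (graph e).dist i.1 s ≤ 1 + (graph e).dist q s := by
    have h2 : (graph e).dist i.1 q = 1 := SimpleGraph.dist_eq_one_iff_adj.2 hq_adj
    have := hconn.dist_triangle (u := i.1) (v := q) (w := s)
    omega
  rw [succeq] at hij
  have hqdist : (graph e).dist q s + 1 = (graph e).dist i.1 s := by omega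
  have hq_par : q = par htree s i :=
    closer_unique htree i.2 hq_adj (par_adj htree s i) hqdist (par_dist htree s i)
  subst hq_par
  have hps := par_dist htree s i
  have hjs := dist_pos htree s j
  constructor
  · intro hc
    rw [hc, SimpleGraph.dist_self] at hqdist
    omega
  · rw [succeq]
    omega

end Geometry
section Geometry2
set_option linter.unusedSectionVars false

open SimpleGraph

variable {e : V → V → ℕ}

lemma mem_descendants {s : V} {i j : {i : V // i ≠ s}} :
    i ∈ descendants e s j ↔ succeq e s i.1 j.1 := by
  rw [descendants, Finset.mem_filter]
  simp

lemma mem_strictDescendants {s : V} {i j : {i : V // i ≠ s}} :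
    i ∈ strictDescendants e s j ↔ i ≠ j ∧ succeq e s i.1 j.1 := by
  rw [strictDescendants, Finset.mem_filter]
  simp

lemma self_mem_descendants {s : V} (j : {i : V // i ≠ s}) : j ∈ descendants e s j :=
  mem_descendants.2 (succeq_refl _ _)

lemma self_not_mem_strict {s : V} (j : {i : V // i ≠ s}) : j ∉ strictDescendants e s j := by
  rw [mem_strictDescendants]
  simp

lemma descendants_eq_insert {s : V} (j : {i : V // i ≠ s}) :
    descendants e s j = insert j (strictDescendants e s j) := by
  ext i
  rw [mem_descendants, Finset.mem_insert, mem_strictDescendants]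
  rcases eq_or_ne i j with rfl | hne
  · simp [succeq_refl]
  · simp [hne]

lemma strict_erase (s : V) (j : {i : V // i ≠ s}) :
    (descendants e s j).erase j = strictDescendants e s j := by
  ext i
  rw [Finset.mem_erase, mem_descendants, mem_strictDescendants]

lemma dist_lt_of_mem_strict (htree : (graph e).IsTree) {s : V} {i j : {i : V // i ≠ s}}
    (h : i ∈ strictDescendants e s j) : (graph e).dist j.1 s < (graph e).dist i.1 s := by
  rw [mem_strictDescendants] at h
  exact dist_lt_of_succeq_ne htree h.2 (fun hc => h.1 (Subtype.ext hc))

lemma descendants_card_lt (htree : (graph e).IsTree) {s : V} {i j : {i : V // i ≠ s}}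
    (h : i ∈ strictDescendants e s j) :
    (descendants e s i).card < (descendants e s j).card := by
  rw [mem_strictDescendants] at h
  have hsub : descendants e s i ⊆ strictDescendants e s j := by
    intro k hk
    rw [mem_descendants] at hk
    rw [mem_strictDescendants]
    refine ⟨fun hc => h.1 ?_, succeq_trans htree hk h.2⟩
    · subst hc
      exact Subtype.ext (succeq_antisymm htree h.2 hk)
  have hss : strictDescendants e s j ⊂ descendants e s j := by
    rw [← strict_erase]
    exact Finset.erase_ssubset (self_mem_descendants j)
  exact lt_of_le_of_lt (Finset.card_le_card hsub) (Finset.card_lt_card hss)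

lemma par_not_succeq (htree : (graph e).IsTree) {s : V} (j : {i : V // i ≠ s}) :
    ¬ succeq e s (par htree s j) j.1 := by
  intro h
  rw [succeq] at h
  have h1 := par_dist htree s j
  have h2 := htree.isConnected.pos_dist_of_ne (par_adj htree s j).ne'
  have h3 : (graph e).dist (par htree s j) j.1 = (graph e).dist j.1 (par htree s j) :=
    SimpleGraph.dist_comm
  omega

lemma par_ne (htree : (graph e).IsTree) {s : V} (j : {i : V // i ≠ s}) :
    j.1 ≠ par htree s j := (par_adj htree s j).ne

/-- G1: degree decomposition at `j`. -/
lemma sum_children (hsym : ∀ i j : V, e i j = e j i) (htree : (graph e).IsTree) {s : V}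
    (j : {i : V // i ≠ s}) :
    deg e j.1 = e j.1 j.1 + e j.1 (par htree s j) +
      ∑ k ∈ strictDescendants e s j, e j.1 k.1 := by
  classical
  set D := (strictDescendants e s j).image Subtype.val with hD
  have hsum : ∑ k ∈ strictDescendants e s j, e j.1 k.1 = ∑ k ∈ D, e j.1 k :=
    (Finset.sum_image (fun a _ b _ h => Subtype.ext h)).symm
  have hjD : j.1 ∉ D := by
    intro hc
    rw [hD, Finset.mem_image] at hc
    obtain ⟨k, hk, hk2⟩ := hc
    exact (mem_strictDescendants.1 hk).1 (Subtype.ext hk2)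
  have hpD : par htree s j ∉ D := by
    intro hc
    rw [hD, Finset.mem_image] at hc
    obtain ⟨k, hk, hk2⟩ := hc
    exact par_not_succeq htree j (hk2 ▸ (mem_strictDescendants.1 hk).2)
  have hjp : j.1 ∉ insert (par htree s j) D := by
    rw [Finset.mem_insert]
    push_neg
    exact ⟨par_ne htree j, hjD⟩
  have hvanish : ∀ k ∈ (Finset.univ : Finset V),
      k ∉ insert j.1 (insert (par htree s j) D) → e j.1 k = 0 := by
    intro k _ hk
    simp only [Finset.mem_insert] at hk
    push_neg at hk
    by_contra h0
    have hadj : (graph e).Adj j.1 k := (graph_adj hsym).2 ⟨Ne.symm hk.1, Nat.pos_of_ne_zero h0⟩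
    rcases adj_cases htree hadj with hc | ⟨hsucc, hks, _⟩
    · exact hk.2.1 hc
    · refine hk.2.2 ?_
      rw [hD, Finset.mem_image]
      exact ⟨⟨k, hks⟩, mem_strictDescendants.2 ⟨fun hkk => hk.1 (congrArg Subtype.val hkk), hsucc⟩,
        rfl⟩
  have := Finset.sum_subset (Finset.subset_univ (insert j.1 (insert (par htree s j) D))) hvanish
  rw [deg, ← this, Finset.sum_insert hjp, Finset.sum_insert hpD, hsum]
  ring

/-- G2: for a strict descendant `i` of `j`, all neighbours of `i` lie in `descendants j`. -/
lemma sum_all_neighbors (hsym : ∀ i j : V, e i j = e j i) (htree : (graph e).IsTree) {s : V}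
    {i j : {i : V // i ≠ s}} (hi : i ∈ strictDescendants e s j) :
    deg e i.1 = e i.1 i.1 + ∑ k ∈ (descendants e s j).erase i, e i.1 k.1 := by
  classical
  obtain ⟨hne, hsucc⟩ := mem_strictDescendants.1 hi
  have hne1 : i.1 ≠ j.1 := fun hc => hne (Subtype.ext hc)
  set D := ((descendants e s j).erase i).image Subtype.val with hD
  have hsum : ∑ k ∈ (descendants e s j).erase i, e i.1 k.1 = ∑ k ∈ D, e i.1 k :=
    (Finset.sum_image (fun a _ b _ h => Subtype.ext h)).symm
  have hiD : i.1 ∉ D := by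
    intro hc
    rw [hD, Finset.mem_image] at hc
    obtain ⟨k, hk, hk2⟩ := hc
    exact Finset.ne_of_mem_erase hk (Subtype.ext hk2)
  have hvanish : ∀ k ∈ (Finset.univ : Finset V), k ∉ insert i.1 D → e i.1 k = 0 := by
    intro k _ hk
    simp only [Finset.mem_insert] at hk
    push_neg at hk
    by_contra h0
    have hadj : (graph e).Adj i.1 k := (graph_adj hsym).2 ⟨Ne.symm hk.1, Nat.pos_of_ne_zero h0⟩
    refine hk.2 ?_
    rw [hD, Finset.mem_image]
    rcases adj_cases htree hadj with hc | ⟨hsucc2, hks, _⟩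
    · obtain ⟨hps, hpsucc⟩ := par_succeq htree hsucc hne1
      refine ⟨⟨k, hc ▸ hps⟩, ?_, rfl⟩
      rw [Finset.mem_erase, mem_descendants]
      constructor
      · intro hc2
        have : i.1 = k := by rw [← congrArg Subtype.val hc2]
        exact hk.1 this.symm
      · exact hc ▸ hpsucc
    · refine ⟨⟨k, hks⟩, ?_, rfl⟩
      rw [Finset.mem_erase, mem_descendants]
      refine ⟨fun hc2 => hk.1 ?_, succeq_trans htree hsucc2 hsucc⟩
      have := congrArg Subtype.val hc2
      simp at this
      exact this
  have := Finset.sum_subset (Finset.subset_univ (insert i.1 D)) hvanish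
  rw [deg, ← this, Finset.sum_insert hiD, hsum]

/-- G4: a vertex outside `descendants j` only sends grains to `j` (if it is the parent). -/
lemma sum_outside (hsym : ∀ i j : V, e i j = e j i) (htree : (graph e).IsTree) {s : V}
    {i j : {i : V // i ≠ s}} (hi : i ∉ descendants e s j) :
    ∑ k ∈ descendants e s j, e i.1 k.1 =
      if i.1 = par htree s j then e j.1 (par htree s j) else 0 := by
  classical
  have h0 : ∀ k ∈ descendants e s j, k ≠ j → e i.1 k.1 = 0 := by
    intro k hk hkj
    by_contra h0
    have hik : i.1 ≠ k.1 := by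
      intro hc
      have : i = k := Subtype.ext hc
      exact hi (this ▸ hk)
    have hadj : (graph e).Adj k.1 i.1 :=
      ((graph_adj hsym).2 ⟨hik, Nat.pos_of_ne_zero h0⟩).symm
    rcases adj_cases htree hadj with hc | ⟨hsucc2, _, _⟩
    · -- i.1 = par k
      have hkj1 : k.1 ≠ j.1 := fun hc2 => hkj (Subtype.ext hc2)
      obtain ⟨hps, hpsucc⟩ := par_succeq htree (mem_descendants.1 hk) hkj1
      exact hi (mem_descendants.2 (hc ▸ hpsucc))
    · exact hi (mem_descendants.2 (succeq_trans htree hsucc2 (mem_descendants.1 hk)))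
  rw [Finset.sum_eq_single_of_mem j (self_mem_descendants j) h0]
  rcases eq_or_ne i.1 (par htree s j) with hc | hc
  · rw [if_pos hc, hc, hsym]
  · rw [if_neg hc]
    by_contra h1
    have hij : i.1 ≠ j.1 := by
      intro hc2
      have h5 : i = j := Subtype.ext hc2
      exact hi (by rw [h5]; exact self_mem_descendants j)
    have hadj : (graph e).Adj j.1 i.1 :=
      ((graph_adj hsym).2 ⟨hij, Nat.pos_of_ne_zero h1⟩).symm
    rcases adj_cases htree hadj with hc2 | ⟨hsucc2, _, _⟩
    · exact hc hc2
    · exact hi (mem_descendants.2 hsucc2)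

end Geometry2
section Phi
set_option linter.unusedSectionVars false

open SimpleGraph

variable {e : V → V → ℕ}

/-- The map sending an ordinary vertex to the edge towards its parent. -/
noncomputable def epsFun (hsym : ∀ i j : V, e i j = e j i) (htree : (graph e).IsTree) (s : V)
    (j : {i : V // i ≠ s}) : (graph e).edgeSet :=
  ⟨s(j.1, par htree s j), (graph e).mem_edgeSet.2 (par_adj htree s j)⟩

lemma epsFun_injective (hsym : ∀ i j : V, e i j = e j i) (htree : (graph e).IsTree) (s : V) :
    Function.Injective (epsFun hsym htree s) := by
  intro j j' h
  have h2 : s(j.1, par htree s j) = s(j'.1, par htree s j') :=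
    congrArg Subtype.val h
  rw [Sym2.eq_iff] at h2
  rcases h2 with ⟨h3, _⟩ | ⟨h3, h4⟩
  · exact Subtype.ext h3
  · exfalso
    have d1 := par_dist htree s j
    have d2 := par_dist htree s j'
    rw [← h4] at d2
    rw [h3] at d1
    omega

lemma epsFun_surjective (hsym : ∀ i j : V, e i j = e j i) (htree : (graph e).IsTree) (s : V) :
    Function.Surjective (epsFun hsym htree s) := by
  rintro ⟨A, hA⟩
  induction A with
  | _ x y =>
    rw [SimpleGraph.mem_edgeSet] at hA
    by_cases hy : y = s
    · have hx : x ≠ s := by rw [← hy]; exact hA.ne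
      refine ⟨⟨x, hx⟩, Subtype.ext ?_⟩
      show s(x, par htree s ⟨x, hx⟩) = s(x, y)
      have hpar : par htree s ⟨x, hx⟩ = y := by
        rcases adj_cases htree (j := ⟨x, hx⟩) (k := y) hA with hc | ⟨_, hc, _⟩
        · exact hc.symm
        · exact absurd hy hc
      rw [hpar]
    · rcases adj_cases htree (j := ⟨y, hy⟩) (k := x) hA.symm with hc | ⟨hsucc, hxs, _⟩
      · refine ⟨⟨y, hy⟩, Subtype.ext ?_⟩
        show s(y, par htree s ⟨y, hy⟩) = s(x, y)
        rw [← hc, Sym2.eq_swap]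
      · rcases adj_cases htree (j := ⟨x, hxs⟩) (k := y) hA with hc2 | ⟨hsucc2, _, _⟩
        · refine ⟨⟨x, hxs⟩, Subtype.ext ?_⟩
          show s(x, par htree s ⟨x, hxs⟩) = s(x, y)
          rw [← hc2]
        · exact absurd (succeq_antisymm htree hsucc hsucc2 : x = y) hA.ne

/-- The equivalence between ordinary vertices and edges of the tree. -/
noncomputable def eps (hsym : ∀ i j : V, e i j = e j i) (htree : (graph e).IsTree) (s : V) :
    {i : V // i ≠ s} ≃ (graph e).edgeSet :=
  Equiv.ofBijective (epsFun hsym htree s)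
    ⟨epsFun_injective hsym htree s, epsFun_surjective hsym htree s⟩

lemma lift_eps (hsym : ∀ i j : V, e i j = e j i) (htree : (graph e).IsTree) (s : V)
    (j : {i : V // i ≠ s}) :
    Sym2.lift ⟨e, hsym⟩ (eps hsym htree s j).1 = e j.1 (par htree s j) := by
  show Sym2.lift ⟨e, hsym⟩ (s(j.1, par htree s j)) = _
  rw [Sym2.lift_mk]

/-- The group-valued invariant. -/
noncomputable def Fmap (hsym : ∀ i j : V, e i j = e j i) (htree : (graph e).IsTree) (s : V)
    (u : Conf s) : ∀ a : (graph e).edgeSet, ZMod (Sym2.lift ⟨e, hsym⟩ a.1) :=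
  fun a => ∑ i ∈ descendants e s ((eps hsym htree s).symm a),
    ((u i : ℕ) : ZMod (Sym2.lift ⟨e, hsym⟩ a.1))

lemma Fmap_add (hsym : ∀ i j : V, e i j = e j i) (htree : (graph e).IsTree) (s : V)
    (u v : Conf s) :
    Fmap hsym htree s (u + v) = Fmap hsym htree s u + Fmap hsym htree s v := by
  funext a
  simp only [Fmap, Pi.add_apply]
  rw [← Finset.sum_add_distrib]
  refine Finset.sum_congr rfl fun i _ => ?_
  exact Nat.cast_add _ _

/-- Core invariance of the descendant-sum under a single toppling. -/
lemma sum_topple (hsym : ∀ i j : V, e i j = e j i) (htree : (graph e).IsTree) {s : V}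
    {m : ℕ} {j : {i : V // i ≠ s}} (hm : m = e j.1 (par htree s j)) {u : Conf s}
    {i0 : {i : V // i ≠ s}} (hval : deg e i0.1 ≤ u i0) :
    ∑ i ∈ descendants e s j, ((toppleAt e s i0 u i : ℕ) : ZMod m) =
      ∑ i ∈ descendants e s j, ((u i : ℕ) : ZMod m) := by
  classical
  have hcast0 : ((e j.1 (par htree s j) : ℕ) : ZMod m) = 0 := by
    subst hm
    exact ZMod.natCast_self _
  by_cases hmem : i0 ∈ descendants e s j
  · rw [← Finset.add_sum_erase _ _ hmem, ← Finset.add_sum_erase _ _ hmem]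
    have h1 : toppleAt e s i0 u i0 = u i0 - deg e i0.1 + e i0.1 i0.1 := toppleAt_self e s
    have h2 : ∀ i ∈ (descendants e s j).erase i0,
        toppleAt e s i0 u i = u i + e i0.1 i.1 := by
      intro i hi
      exact toppleAt_ne e s (Finset.ne_of_mem_erase hi)
    rw [h1, Finset.sum_congr rfl (fun i hi => by rw [h2 i hi])]
    have hc1 : ((u i0 - deg e i0.1 + e i0.1 i0.1 : ℕ) : ZMod m) =
        (u i0 : ZMod m) - (deg e i0.1 : ZMod m) + (e i0.1 i0.1 : ZMod m) := by
      push_cast [Nat.cast_sub hval]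
      ring
    have hsplit : ∑ i ∈ (descendants e s j).erase i0,
        (((u i + e i0.1 i.1 : ℕ)) : ZMod m) =
        (∑ i ∈ (descendants e s j).erase i0, ((u i : ℕ) : ZMod m)) +
        (∑ i ∈ (descendants e s j).erase i0, ((e i0.1 i.1 : ℕ) : ZMod m)) := by
      rw [← Finset.sum_add_distrib]
      push_cast
      rfl
    rw [hc1, hsplit]
    rcases eq_or_ne i0 j with rfl | hne
    · have hdeg := sum_children hsym htree i0
      have hdegZ : ((deg e i0.1 : ℕ) : ZMod m) = (e i0.1 i0.1 : ZMod m) +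
          (e i0.1 (par htree s i0) : ZMod m) +
          ∑ i ∈ strictDescendants e s i0, ((e i0.1 i.1 : ℕ) : ZMod m) := by
        rw [hdeg]
        push_cast
        ring
      rw [strict_erase, hdegZ, hcast0]
      ring
    · have hst : i0 ∈ strictDescendants e s j := by
        rw [← strict_erase]
        exact Finset.mem_erase.2 ⟨hne, hmem⟩
      have hdeg := sum_all_neighbors hsym htree hst
      have hdegZ : ((deg e i0.1 : ℕ) : ZMod m) = (e i0.1 i0.1 : ZMod m) +
          ∑ i ∈ (descendants e s j).erase i0, ((e i0.1 i.1 : ℕ) : ZMod m) := by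
        rw [hdeg]
        push_cast
        rfl
      rw [hdegZ]
      ring
  · have h2 : ∀ i ∈ descendants e s j, toppleAt e s i0 u i = u i + e i0.1 i.1 := by
      intro i hi
      refine toppleAt_ne e s (fun hc => hmem (hc ▸ hi))
    rw [Finset.sum_congr rfl (fun i hi => by rw [h2 i hi])]
    have hsplit : ∑ i ∈ descendants e s j, (((u i + e i0.1 i.1 : ℕ)) : ZMod m) =
        (∑ i ∈ descendants e s j, ((u i : ℕ) : ZMod m)) +
        (∑ i ∈ descendants e s j, ((e i0.1 i.1 : ℕ) : ZMod m)) := by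
      rw [← Finset.sum_add_distrib]
      push_cast
      rfl
    rw [hsplit]
    have houts : ∑ i ∈ descendants e s j, ((e i0.1 i.1 : ℕ) : ZMod m) = 0 := by
      have := sum_outside hsym htree hmem
      have hZ : ((∑ k ∈ descendants e s j, e i0.1 k.1 : ℕ) : ZMod m) =
          ∑ i ∈ descendants e s j, ((e i0.1 i.1 : ℕ) : ZMod m) := by push_cast; rfl
      rw [← hZ, this]
      split_ifs
      · exact hcast0
      · exact Nat.cast_zero
    rw [houts, add_zero]

lemma Fmap_topple (hsym : ∀ i j : V, e i j = e j i) (htree : (graph e).IsTree) {s : V}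
    {u : Conf s} {i0 : {i : V // i ≠ s}} (hval : deg e i0.1 ≤ u i0) :
    Fmap hsym htree s (toppleAt e s i0 u) = Fmap hsym htree s u := by
  funext a
  obtain ⟨j, rfl⟩ := (eps hsym htree s).surjective a
  simp only [Fmap, Equiv.symm_apply_apply]
  exact sum_topple hsym htree (lift_eps hsym htree s j) hval

lemma Fmap_applySeq (hsym : ∀ i j : V, e i j = e j i) (htree : (graph e).IsTree) {s : V} :
    ∀ (L : List {i : V // i ≠ s}) (u : Conf s), ValidSeq e s u L →
      Fmap hsym htree s (applySeq e s u L) = Fmap hsym htree s u := by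
  intro L
  induction L with
  | nil => intro u _; rw [applySeq_nil]
  | cons a L ih =>
    intro u hv
    show Fmap hsym htree s (applySeq e s (toppleAt e s a u) L) = _
    rw [ih _ hv.2, Fmap_topple hsym htree hv.1]

lemma Fmap_reaches (hsym : ∀ i j : V, e i j = e j i) (htree : (graph e).IsTree) {s : V}
    {u z : Conf s} (h : Reaches e s u z) :
    Fmap hsym htree s z = Fmap hsym htree s u := by
  obtain ⟨L, hv, happ⟩ := h
  rw [← happ, Fmap_applySeq hsym htree L u hv]

/-- Windows of length `m` inject into `ZMod m`. -/
lemma cast_inj_window {m L a b : ℕ} (hm : 0 < m) (ha : L ≤ a) (ha2 : a < L + m)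
    (hb : L ≤ b) (hb2 : b < L + m) (h : (a : ZMod m) = b) : a = b := by
  haveI : NeZero m := ⟨hm.ne'⟩
  have hA : a = L + (a - L) := by omega
  have hB : b = L + (b - L) := by omega
  rw [hA, hB, Nat.cast_add, Nat.cast_add] at h
  have h2 : ((a - L : ℕ) : ZMod m) = ((b - L : ℕ) : ZMod m) := by
    exact add_left_cancel h
  have h3 := congrArg ZMod.val h2
  rw [ZMod.val_cast_of_lt (by omega), ZMod.val_cast_of_lt (by omega)] at h3
  omega

/-- Injectivity of `Fmap` on any box. -/
lemma Fmap_injOn (hsym : ∀ i j : V, e i j = e j i) (htree : (graph e).IsTree) {s : V}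
    (L : {i : V // i ≠ s} → ℕ) {u v : Conf s}
    (hu : ∀ j, L j ≤ u j ∧ u j < L j + e j.1 (par htree s j))
    (hv : ∀ j, L j ≤ v j ∧ v j < L j + e j.1 (par htree s j))
    (h : Fmap hsym htree s u = Fmap hsym htree s v) : u = v := by
  classical
  by_contra hne
  have hDne : (Finset.univ.filter (fun j => u j ≠ v j)).Nonempty := by
    by_contra hempty
    rw [Finset.not_nonempty_iff_eq_empty] at hempty
    refine hne (funext fun j => ?_)
    by_contra hj
    have : j ∈ Finset.univ.filter (fun j => u j ≠ v j) := by
      rw [Finset.mem_filter]; exact ⟨Finset.mem_univ _, hj⟩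
    rw [hempty] at this
    cases this
  obtain ⟨j, hjD, hmax⟩ := Finset.exists_max_image _ (fun j => (graph e).dist j.1 s) hDne
  have hjuv : u j ≠ v j := (Finset.mem_filter.1 hjD).2
  have hstrict : ∀ i ∈ strictDescendants e s j, u i = v i := by
    intro i hi
    by_contra hne2
    have hiD : i ∈ Finset.univ.filter (fun j => u j ≠ v j) := by
      rw [Finset.mem_filter]; exact ⟨Finset.mem_univ _, hne2⟩
    have := hmax i hiD
    have := dist_lt_of_mem_strict htree hi
    omega
  have hF := congrFun h (eps hsym htree s j)
  have hsymm := Equiv.symm_apply_apply (eps hsym htree s) j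
  simp only [Fmap, hsymm] at hF
  rw [descendants_eq_insert, Finset.sum_insert (self_not_mem_strict j),
    Finset.sum_insert (self_not_mem_strict j),
    Finset.sum_congr rfl (fun i hi => by rw [hstrict i hi])] at hF
  have hcast : ((u j : ℕ) : ZMod (Sym2.lift ⟨e, hsym⟩ (eps hsym htree s j).1)) = (v j : ℕ) :=
    add_right_cancel hF
  have hmpos : 0 < Sym2.lift ⟨e, hsym⟩ (eps hsym htree s j).1 := by
    rw [lift_eps hsym htree s j]
    exact c_pos hsym htree s j
  have hbu := hu j
  have hbv := hv j
  rw [← lift_eps hsym htree s j] at hbu hbv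
  exact hjuv (cast_inj_window hmpos hbu.1 hbu.2 hbv.1 hbv.2 hcast)

end Phi
section Solve
set_option linter.unusedSectionVars false
set_option linter.unusedVariables false

open SimpleGraph

variable {e : V → V → ℕ}

/-- Triangular inverse of `Fmap` with values in a prescribed box. -/
noncomputable def solve (hsym : ∀ i j : V, e i j = e j i) (htree : (graph e).IsTree) (s : V)
    (L : {i : V // i ≠ s} → ℕ) (t : ∀ a : (graph e).edgeSet, ZMod (Sym2.lift ⟨e, hsym⟩ a.1))
    (j : {i : V // i ≠ s}) : ℕ :=
  L j + (t (eps hsym htree s j)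
    - ((L j : ℕ) : ZMod (Sym2.lift ⟨e, hsym⟩ (eps hsym htree s j).1))
    - ∑ i ∈ (strictDescendants e s j).attach,
        ((solve hsym htree s L t i.1 : ℕ) : ZMod (Sym2.lift ⟨e, hsym⟩ (eps hsym htree s j).1))).val
termination_by (descendants e s j).card
decreasing_by exact descendants_card_lt htree i.2

lemma solve_lb (hsym : ∀ i j : V, e i j = e j i) (htree : (graph e).IsTree) (s : V)
    (L : {i : V // i ≠ s} → ℕ) (t : ∀ a : (graph e).edgeSet, ZMod (Sym2.lift ⟨e, hsym⟩ a.1))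
    (j : {i : V // i ≠ s}) : L j ≤ solve hsym htree s L t j := by
  rw [solve]
  omega

lemma solve_ub (hsym : ∀ i j : V, e i j = e j i) (htree : (graph e).IsTree) (s : V)
    (L : {i : V // i ≠ s} → ℕ) (t : ∀ a : (graph e).edgeSet, ZMod (Sym2.lift ⟨e, hsym⟩ a.1))
    (j : {i : V // i ≠ s}) : solve hsym htree s L t j < L j + e j.1 (par htree s j) := by
  haveI : NeZero (Sym2.lift ⟨e, hsym⟩ (eps hsym htree s j).1) :=
    ⟨by rw [lift_eps hsym htree s j]; exact (c_pos hsym htree s j).ne'⟩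
  have hval := ZMod.val_lt (t (eps hsym htree s j)
    - ((L j : ℕ) : ZMod (Sym2.lift ⟨e, hsym⟩ (eps hsym htree s j).1))
    - ∑ i ∈ (strictDescendants e s j).attach,
        ((solve hsym htree s L t i.1 : ℕ) : ZMod (Sym2.lift ⟨e, hsym⟩ (eps hsym htree s j).1)))
  have hM := lift_eps hsym htree s j
  rw [solve]
  omega

lemma Fmap_solve (hsym : ∀ i j : V, e i j = e j i) (htree : (graph e).IsTree) (s : V)
    (L : {i : V // i ≠ s} → ℕ)
    (t : ∀ a : (graph e).edgeSet, ZMod (Sym2.lift ⟨e, hsym⟩ a.1)) :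
    Fmap hsym htree s (solve hsym htree s L t) = t := by
  funext a
  obtain ⟨j, rfl⟩ := (eps hsym htree s).surjective a
  haveI : NeZero (Sym2.lift ⟨e, hsym⟩ (eps hsym htree s j).1) :=
    ⟨by rw [lift_eps hsym htree s j]; exact (c_pos hsym htree s j).ne'⟩
  simp only [Fmap, Equiv.symm_apply_apply]
  rw [descendants_eq_insert, Finset.sum_insert (self_not_mem_strict j)]
  set M := Sym2.lift ⟨e, hsym⟩ (eps hsym htree s j).1 with hM
  set X := t (eps hsym htree s j) - ((L j : ℕ) : ZMod M)
    - ∑ i ∈ (strictDescendants e s j).attach, ((solve hsym htree s L t i.1 : ℕ) : ZMod M)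
    with hX
  have h1 : ((solve hsym htree s L t j : ℕ) : ZMod M) = ((L j : ℕ) : ZMod M) + X := by
    rw [solve]
    rw [Nat.cast_add]
    congr 1
    exact ZMod.natCast_rightInverse X
  have h2 : ∑ i ∈ (strictDescendants e s j).attach,
      ((solve hsym htree s L t i.1 : ℕ) : ZMod M) =
      ∑ i ∈ strictDescendants e s j, ((solve hsym htree s L t i : ℕ) : ZMod M) :=
    Finset.sum_attach (strictDescendants e s j)
      (fun i => ((solve hsym htree s L t i : ℕ) : ZMod M))
  rw [h1, hX, ← h2]
  ring

/-- Dhar's criterion: stabilizing from a large configuration lands in the box. -/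
lemma dhar (hsym : ∀ i j : V, e i j = e j i) (htree : (graph e).IsTree) {s : V}
    {X u : Conf s} (hX : ∀ k, deg e k.1 ≤ X k) (hr : Reaches e s X u) (hu : Stable e s u)
    (j : {i : V // i ≠ s}) : deg e j.1 - e j.1 (par htree s j) ≤ u j := by
  obtain ⟨Lst, hv, happ⟩ := hr
  by_contra hcon
  push_neg at hcon
  have hmemL : ∀ i ∈ descendants e s j, i ∈ Lst := fun i _ => mem_of_deg_le e s (hX i) happ hu
  obtain ⟨j', P, Q, hsplit, hj'A, hj'Q, hAQ⟩ := scan_last s Lst.length Lst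
    (descendants e s j) le_rfl ⟨j, self_mem_descendants j⟩ hmemL
  have hsplit2 : Lst = (P ++ [j']) ++ Q := by rw [hsplit]; simp
  rw [hsplit2] at hv happ
  rw [validSeq_append] at hv
  obtain ⟨hvP, hvQ⟩ := hv
  rw [applySeq_append] at happ
  set Y := applySeq e s X (P ++ [j']) with hY
  rw [validSeq_append] at hvP
  have hdegj' : deg e j'.1 ≤ applySeq e s X P j' := hvP.2.1
  have hYj' : Y j' = applySeq e s X P j' - deg e j'.1 + e j'.1 j'.1 := by
    rw [hY, applySeq_append]
    have h4 : applySeq e s (applySeq e s X P) [j'] =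
        toppleAt e s j' (applySeq e s X P) := rfl
    rw [h4, toppleAt_self]
  have huj' : u j' = Y j' + (Q.map fun k => e k.1 j'.1).sum := by
    rw [← happ]
    exact applySeq_of_not_mem e s Q Y hj'Q
  have hsum : ∑ k ∈ (descendants e s j).erase j', e k.1 j'.1 ≤
      (Q.map fun k => e k.1 j'.1).sum :=
    finset_sum_le_list_sum s _ Q _
      (fun x hx => hAQ x (Finset.mem_of_mem_erase hx) (Finset.ne_of_mem_erase hx))
  have hsym2 : ∑ k ∈ (descendants e s j).erase j', e k.1 j'.1 =
      ∑ k ∈ (descendants e s j).erase j', e j'.1 k.1 :=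
    Finset.sum_congr rfl (fun k _ => hsym _ _)
  rcases eq_or_ne j' j with rfl | hne
  · have hG1 := sum_children hsym htree j'
    rw [strict_erase] at hsum hsym2
    omega
  · have hst : j' ∈ strictDescendants e s j := by
      rw [← strict_erase]
      exact Finset.mem_erase.2 ⟨hne, hj'A⟩
    have hG2 := sum_all_neighbors hsym htree hst
    have hstab := hu j'
    omega

/-- The main box: stable and each coordinate at least `deg - c`. -/
def MainBox (htree : (graph e).IsTree) (s : V) (u : Conf s) : Prop :=
  Stable e s u ∧ ∀ j, deg e j.1 - e j.1 (par htree s j) ≤ u j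

lemma mainBox_window (htree : (graph e).IsTree) (s : V) {u : Conf s}
    (h : MainBox htree s u) (j : {i : V // i ≠ s}) :
    (fun j => deg e j.1 - e j.1 (par htree s j)) j ≤ u j ∧
    u j < (fun j => deg e j.1 - e j.1 (par htree s j)) j + e j.1 (par htree s j) := by
  have h1 := c_le_deg htree s j
  have h2 := h.1 j
  have h3 := h.2 j
  constructor
  · show deg e j.1 - e j.1 (par htree s j) ≤ u j
    exact h3
  · show u j < deg e j.1 - e j.1 (par htree s j) + e j.1 (par htree s j)
    omega

lemma recurrent_mainBox (hsym : ∀ i j : V, e i j = e j i) (htree : (graph e).IsTree) {s : V}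
    {σ : Conf s → Conf s} (hσ : IsStabilization e s σ) {u : Conf s}
    (hu : Recurrent e s σ u) : MainBox htree s u := by
  refine ⟨hu.1, fun j => ?_⟩
  obtain ⟨w, hw⟩ := hu.2 (fun k : {i : V // i ≠ s} => deg e k.1)
  set X := (fun k : {i : V // i ≠ s} => deg e k.1) + w with hXdef
  have hX : ∀ k, deg e k.1 ≤ X k := by
    intro k
    show deg e k.1 ≤ deg e k.1 + w k
    omega
  have h5 := dhar hsym htree hX (sigma_reaches e s hσ X) (hσ X).1 j
  have hw2 : σ X = u := hw
  rwa [hw2] at h5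

lemma mainBox_recurrent (hsym : ∀ i j : V, e i j = e j i) (htree : (graph e).IsTree) {s : V}
    {σ : Conf s → Conf s} (hσ : IsStabilization e s σ) {u : Conf s}
    (hu : MainBox htree s u) : Recurrent e s σ u := by
  refine ⟨hu.1, fun v => ?_⟩
  set L1 : {i : V // i ≠ s} → ℕ := fun j => max (v j) (deg e j.1) with hL1
  set X := solve hsym htree s L1 (Fmap hsym htree s u) with hXdef
  have hXv : ∀ j, v j ≤ X j := fun j =>
    le_trans (le_max_left _ _) (solve_lb hsym htree s L1 _ j)
  have hXdeg : ∀ j, deg e j.1 ≤ X j := fun j =>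
    le_trans (le_max_right _ _) (solve_lb hsym htree s L1 _ j)
  refine ⟨fun j => X j - v j, ?_⟩
  have hvw : v + (fun j => X j - v j) = X := by
    funext j
    show v j + (X j - v j) = X j
    have := hXv j
    omega
  rw [hvw]
  -- σ X is in the main box and has the same Fmap value as u
  have hbox : MainBox htree s (σ X) :=
    ⟨(hσ X).1, fun j => dhar hsym htree hXdeg (sigma_reaches e s hσ X) (hσ X).1 j⟩
  have hFX : Fmap hsym htree s (σ X) = Fmap hsym htree s u := by
    rw [Fmap_reaches hsym htree (sigma_reaches e s hσ X), hXdef,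
      Fmap_solve hsym htree s L1 _]
  exact Fmap_injOn hsym htree _ (mainBox_window htree s hbox) (mainBox_window htree s hu) hFX

lemma solve_mainBox (hsym : ∀ i j : V, e i j = e j i) (htree : (graph e).IsTree) (s : V)
    (t : ∀ a : (graph e).edgeSet, ZMod (Sym2.lift ⟨e, hsym⟩ a.1)) :
    MainBox htree s (solve hsym htree s (fun j => deg e j.1 - e j.1 (par htree s j)) t) := by
  constructor
  · intro j
    have h1 := solve_ub hsym htree s (fun j => deg e j.1 - e j.1 (par htree s j)) t j
    have h2 := c_le_deg htree s j
    omega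
  · intro j
    exact solve_lb hsym htree s (fun j => deg e j.1 - e j.1 (par htree s j)) t j

end Solve
theorem stmt_6 (e : V → V → ℕ) (hsym : ∀ i j : V, e i j = e j i)
    (htree : (graph e).IsTree) (s s' : V)
    (σ : Conf s → Conf s) (hσ : IsStabilization e s σ)
    (σ' : Conf s' → Conf s') (hσ' : IsStabilization e s' σ') :
    (∃ F : Conf s → ∀ a : (graph e).edgeSet, ZMod (Sym2.lift ⟨e, hsym⟩ a.1),
      Set.BijOn F {u | Recurrent e s σ u} Set.univ ∧
      ∀ u v, Recurrent e s σ u → Recurrent e s σ v → F (σ (u + v)) = F u + F v) ∧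
    (∃ F' : Conf s' → ∀ a : (graph e).edgeSet, ZMod (Sym2.lift ⟨e, hsym⟩ a.1),
      Set.BijOn F' {u | Recurrent e s' σ' u} Set.univ ∧
      ∀ u v, Recurrent e s' σ' u → Recurrent e s' σ' v → F' (σ' (u + v)) = F' u + F' v) ∧
    (∃ H : Conf s → Conf s',
      Set.BijOn H {u | Recurrent e s σ u} {u | Recurrent e s' σ' u} ∧
      ∀ u v, Recurrent e s σ u → Recurrent e s σ v → H (σ (u + v)) = σ' (H u + H v)) := by
  classical
  have hrec : ∀ u : Conf s, Recurrent e s σ u ↔ MainBox htree s u := fun u =>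
    ⟨recurrent_mainBox hsym htree hσ, mainBox_recurrent hsym htree hσ⟩
  have hrec' : ∀ u : Conf s', Recurrent e s' σ' u ↔ MainBox htree s' u := fun u =>
    ⟨recurrent_mainBox hsym htree hσ', mainBox_recurrent hsym htree hσ'⟩
  have hbij : Set.BijOn (Fmap hsym htree s) {u | Recurrent e s σ u} Set.univ := by
    refine ⟨fun u _ => trivial, ?_, ?_⟩
    · intro u hu v hv h
      exact Fmap_injOn hsym htree _ (mainBox_window htree s ((hrec u).1 hu))
        (mainBox_window htree s ((hrec v).1 hv)) h
    · intro t _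
      exact ⟨solve hsym htree s (fun j => deg e j.1 - e j.1 (par htree s j)) t,
        (hrec _).2 (solve_mainBox hsym htree s t), Fmap_solve hsym htree s _ t⟩
  have hbij' : Set.BijOn (Fmap hsym htree s') {u | Recurrent e s' σ' u} Set.univ := by
    refine ⟨fun u _ => trivial, ?_, ?_⟩
    · intro u hu v hv h
      exact Fmap_injOn hsym htree _ (mainBox_window htree s' ((hrec' u).1 hu))
        (mainBox_window htree s' ((hrec' v).1 hv)) h
    · intro t _
      exact ⟨solve hsym htree s' (fun j => deg e j.1 - e j.1 (par htree s' j)) t,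
        (hrec' _).2 (solve_mainBox hsym htree s' t), Fmap_solve hsym htree s' _ t⟩
  have hadd : ∀ u v : Conf s, Fmap hsym htree s (σ (u + v)) =
      Fmap hsym htree s u + Fmap hsym htree s v := by
    intro u v
    rw [Fmap_reaches hsym htree (sigma_reaches e s hσ (u + v)), Fmap_add]
  have hadd' : ∀ u v : Conf s', Fmap hsym htree s' (σ' (u + v)) =
      Fmap hsym htree s' u + Fmap hsym htree s' v := by
    intro u v
    rw [Fmap_reaches hsym htree (sigma_reaches e s' hσ' (u + v)), Fmap_add]
  refine ⟨⟨Fmap hsym htree s, hbij, fun u v _ _ => hadd u v⟩,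
    ⟨Fmap hsym htree s', hbij', fun u v _ _ => hadd' u v⟩, ?_⟩
  -- the change-of-sink bijection
  set H : Conf s → Conf s' := fun u =>
    solve hsym htree s' (fun j => deg e j.1 - e j.1 (par htree s' j))
      (Fmap hsym htree s u) with hHdef
  have hH_F : ∀ u : Conf s, Fmap hsym htree s' (H u) = Fmap hsym htree s u := fun u =>
    Fmap_solve hsym htree s' _ _
  have hH_box : ∀ u : Conf s, MainBox htree s' (H u) := fun u =>
    solve_mainBox hsym htree s' _
  have hH_rec : ∀ u : Conf s, Recurrent e s' σ' (H u) := fun u => (hrec' _).2 (hH_box u)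
  refine ⟨H, ⟨fun u _ => hH_rec u, ?_, ?_⟩, ?_⟩
  · -- InjOn
    intro u hu v hv h
    have h2 : Fmap hsym htree s u = Fmap hsym htree s v := by
      rw [← hH_F u, ← hH_F v, h]
    exact Fmap_injOn hsym htree _ (mainBox_window htree s ((hrec u).1 hu))
      (mainBox_window htree s ((hrec v).1 hv)) h2
  · -- SurjOn
    intro u' hu'
    refine ⟨solve hsym htree s (fun j => deg e j.1 - e j.1 (par htree s j))
      (Fmap hsym htree s' u'), (hrec _).2 (solve_mainBox hsym htree s _), ?_⟩
    show H _ = u'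
    rw [hHdef]
    simp only
    rw [Fmap_solve hsym htree s _ _]
    refine Fmap_injOn hsym htree _ (mainBox_window htree s' (solve_mainBox hsym htree s' _))
      (mainBox_window htree s' ((hrec' u').1 hu')) ?_
    exact Fmap_solve hsym htree s' _ _
  · -- intertwining
    intro u v hu hv
    have hbox1 : MainBox htree s' (H (σ (u + v))) := hH_box _
    have hbox2 : MainBox htree s' (σ' (H u + H v)) :=
      (hrec' _).1 (recurrent_sigma_add e s' hσ' (hH_rec u) (H v))
    refine Fmap_injOn hsym htree _ (mainBox_window htree s' hbox1)
      (mainBox_window htree s' hbox2) ?_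
    have hL : Fmap hsym htree s' (H (σ (u + v))) = Fmap hsym htree s u + Fmap hsym htree s v := by
      rw [hH_F, hadd]
    have hR : Fmap hsym htree s' (σ' (H u + H v)) =
        Fmap hsym htree s u + Fmap hsym htree s v := by
      rw [hadd', hH_F, hH_F]
    rw [hL, hR]

end SandpilePaper
end

section
/- Let T be a thick tree with loops with sink s and toppling matrix Δ with rows Δ_i ∈ ℤ^{V₀} for i ∈ V₀. For any j ∈ V₀, the vector ∑_{i ⪰ j} Δ_i ∈ ℤ^{V₀} has j-th component equal to e_{j,p(j)}, has p(j)-th component equal to −e_{j,p(j)} when p(j) ≠ s, and has all other components equal to 0. -/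
namespace SandpilePaper

variable {V : Type*} [Fintype V] [DecidableEq V]

section Helpers
open SimpleGraph
set_option linter.unusedSectionVars false

open SimpleGraph

variable {V : Type*} [Fintype V] [DecidableEq V]

lemma aux_dist_support {G : SimpleGraph V} {b s x : V} (w : G.Walk b s)
    (hw : w.length = G.dist b s) (hx : x ∈ w.support) :
    G.dist b x + G.dist x s ≤ G.dist b s := by
  have h1 := G.dist_le (w.takeUntil x hx)
  have h2 := G.dist_le (w.dropUntil x hx)
  have h3 : (w.takeUntil x hx).length + (w.dropUntil x hx).length = w.length := by
    rw [← Walk.length_append, w.take_spec hx]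
  omega

lemma aux_ne_dist {G : SimpleGraph V} (htree : G.IsTree) {a b s : V} (hab : G.Adj a b) :
    G.dist a s ≠ G.dist b s := by
  intro h
  have hconn := htree.isConnected
  obtain ⟨Pb, hPb, hlb⟩ := hconn.exists_path_of_dist b s
  have hans : a ∉ Pb.support := by
    intro ha
    have h1 := aux_dist_support Pb hlb ha
    have h2 : 0 < G.dist b a := hconn.pos_dist_of_ne (Ne.symm hab.ne)
    omega
  obtain ⟨Pa, hPa, hla⟩ := hconn.exists_path_of_dist a s
  have heq : Walk.cons hab Pb = Pa :=
    (htree.existsUnique_path a s).unique (hPb.cons hans) hPa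
  have := congrArg Walk.length heq
  rw [Walk.length_cons, hla, hlb, h] at this
  omega

lemma aux_unique_parent {G : SimpleGraph V} (htree : G.IsTree) {a b c s : V}
    (hab : G.Adj a b) (hac : G.Adj a c)
    (hb : G.dist b s + 1 = G.dist a s) (hc : G.dist c s + 1 = G.dist a s) : b = c := by
  have hconn := htree.isConnected
  obtain ⟨Pb, hPb, hlb⟩ := hconn.exists_path_of_dist b s
  obtain ⟨Pc, hPc, hlc⟩ := hconn.exists_path_of_dist c s
  have hansb : a ∉ Pb.support := fun ha => by
    have := aux_dist_support Pb hlb ha; omega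
  have hansc : a ∉ Pc.support := fun ha => by
    have := aux_dist_support Pc hlc ha; omega
  have heq : Walk.cons hab Pb = Walk.cons hac Pc :=
    (htree.existsUnique_path a s).unique (hPb.cons hansb) (hPc.cons hansc)
  have := congrArg (fun w : G.Walk a s => w.getVert 1) heq
  simpa [Walk.getVert_cons] using this

lemma aux_step {G : SimpleGraph V} (hconn : G.Connected) {a c : V} (h : 1 ≤ G.dist a c) :
    ∃ m, G.Adj a m ∧ G.dist m c + 1 = G.dist a c := by
  obtain ⟨w, hw⟩ := hconn.exists_walk_length_eq_dist a c
  cases w with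
  | nil => rw [SimpleGraph.dist_self] at h; omega
  | @cons _ m _ hadj q =>
    refine ⟨m, hadj, ?_⟩
    have h1 := G.dist_le q
    rw [Walk.length_cons] at hw
    have h2 := hconn.dist_triangle (u := a) (v := m) (w := c)
    have h3 : G.dist a m = 1 := dist_eq_one_iff_adj.2 hadj
    omega


end Helpers

theorem stmt_11 (e : V → V → ℕ) (s : V) (hsym : ∀ i j : V, e i j = e j i)
    (htree : (graph e).IsTree)
    (p : {i : V // i ≠ s} → V) (hp : IsParent e s p)
    (j : {i : V // i ≠ s}) :
    (∑ i ∈ descendants e s j, deltaRow e s i) =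
      fun k => if k = j then (e j.1 (p j) : ℤ)
        else if (k : V) = p j then -(e j.1 (p j) : ℤ) else 0 := by
  classical
  have hconn := htree.isConnected
  obtain ⟨hadjp, hdp⟩ := hp j
  have hjj : succeq e s j.1 j.1 := by
    unfold succeq; rw [SimpleGraph.dist_self]; omega
  have hnotp : ¬ succeq e s (p j) j.1 := by
    unfold succeq; intro h; omega
  have hnots : ¬ succeq e s s j.1 := by
    unfold succeq
    intro h
    rw [SimpleGraph.dist_self, SimpleGraph.dist_comm] at h
    have := hconn.pos_dist_of_ne j.2
    omega
  have L4 : ∀ i l : V, succeq e s i j.1 → i ≠ j.1 → (graph e).Adj i l → succeq e s l j.1 := by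
    intro i l hi hij hadj
    unfold succeq at hi ⊢
    have hdij : 0 < (graph e).dist i j.1 := hconn.pos_dist_of_ne hij
    have hne : (graph e).dist i s ≠ (graph e).dist l s := aux_ne_dist htree hadj
    have hil : (graph e).dist i l = 1 := SimpleGraph.dist_eq_one_iff_adj.2 hadj
    have hli : (graph e).dist l i = 1 := by rw [SimpleGraph.dist_comm]; exact hil
    have t1 : (graph e).dist l s ≤ (graph e).dist l i + (graph e).dist i s := hconn.dist_triangle
    have t2 : (graph e).dist i s ≤ (graph e).dist i l + (graph e).dist l s := hconn.dist_triangle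
    rcases Nat.lt_or_ge ((graph e).dist i s) ((graph e).dist l s) with hcase | hcase
    · have t3 : (graph e).dist l s ≤ (graph e).dist l j.1 + (graph e).dist j.1 s :=
        hconn.dist_triangle
      have t4 : (graph e).dist l j.1 ≤ (graph e).dist l i + (graph e).dist i j.1 :=
        hconn.dist_triangle
      omega
    · obtain ⟨m, ham, hm⟩ := aux_step hconn hdij
      have hm1 : (graph e).dist i m = 1 := SimpleGraph.dist_eq_one_iff_adj.2 ham
      have t5 : (graph e).dist m s ≤ (graph e).dist m j.1 + (graph e).dist j.1 s :=
        hconn.dist_triangle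
      have t6 : (graph e).dist i s ≤ (graph e).dist i m + (graph e).dist m s := hconn.dist_triangle
      have hms : (graph e).dist m s + 1 = (graph e).dist i s := by omega
      have hlm : l = m := aux_unique_parent htree hadj ham (by omega) hms
      subst hlm
      omega
  have L3 : ∀ l : V, (graph e).Adj j.1 l → l ≠ p j → succeq e s l j.1 := by
    intro l hadj hlp
    unfold succeq
    have hne : (graph e).dist j.1 s ≠ (graph e).dist l s := aux_ne_dist htree hadj
    have hjl : (graph e).dist j.1 l = 1 := SimpleGraph.dist_eq_one_iff_adj.2 hadj
    have hlj : (graph e).dist l j.1 = 1 := by rw [SimpleGraph.dist_comm]; exact hjl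
    have t1 : (graph e).dist l s ≤ (graph e).dist l j.1 + (graph e).dist j.1 s :=
      hconn.dist_triangle
    have t2 : (graph e).dist j.1 s ≤ (graph e).dist j.1 l + (graph e).dist l s :=
      hconn.dist_triangle
    rcases Nat.lt_or_ge ((graph e).dist j.1 s) ((graph e).dist l s) with hcase | hcase
    · omega
    · exact absurd (aux_unique_parent htree hadj hadjp (by omega) hdp) hlp
  have key : ∀ i l : V, succeq e s i j.1 → ¬ succeq e s l j.1 → 0 < e i l →
      i = j.1 ∧ l = p j := by
    intro i l hi hl hpos
    have hne : i ≠ l := by rintro rfl; exact hl hi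
    have hadj : (graph e).Adj i l := ⟨hne, Or.inl hpos⟩
    by_cases hij : i = j.1
    · subst hij
      refine ⟨rfl, ?_⟩
      by_contra hlp
      exact hl (L3 l hadj hlp)
    · exact absurd (L4 i l hi hij hadj) hl
  funext k
  have hmem : ∀ i : {i : V // i ≠ s}, i ∈ descendants e s j ↔ succeq e s i.1 j.1 := by
    intro i; simp [descendants]
  have hrow : ∀ i : {i : V // i ≠ s}, deltaRow e s i k
      = (if i = k then (deg e k.1 : ℤ) else 0) - (e i.1 k.1 : ℤ) := by
    intro i
    by_cases h : i = k
    · subst h; simp [deltaRow]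
    · simp [deltaRow, h]
  rw [Finset.sum_apply, Finset.sum_congr rfl fun i _ => hrow i, Finset.sum_sub_distrib, Finset.sum_ite_eq']
  have hsum2 : (∑ i ∈ descendants e s j, (e i.1 k.1 : ℤ))
      = ∑ l ∈ Finset.univ.filter (fun l => succeq e s l j.1), (e l k.1 : ℤ) := by
    apply Finset.sum_bij (fun (i : {i : V // i ≠ s}) (_ : i ∈ descendants e s j) => i.1)
    · intro a ha; simp only [Finset.mem_filter, Finset.mem_univ, true_and]; exact (hmem a).1 ha
    · intro a _ b _ hab; exact Subtype.ext hab
    · intro l hl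
      simp only [Finset.mem_filter, Finset.mem_univ, true_and] at hl
      have hls : l ≠ s := by rintro rfl; exact hnots hl
      exact ⟨⟨l, hls⟩, (hmem _).2 hl, rfl⟩
    · intro a _; rfl
  rw [hsum2]
  by_cases hk : succeq e s k.1 j.1
  · rw [if_pos ((hmem k).2 hk)]
    have hflip : (∑ l ∈ Finset.univ.filter (fun l => succeq e s l j.1), (e l k.1 : ℤ))
        = ∑ l ∈ Finset.univ.filter (fun l => succeq e s l j.1), (e k.1 l : ℤ) :=
      Finset.sum_congr rfl fun l _ => by rw [hsym]
    have hdeg : (deg e k.1 : ℤ) = ∑ l ∈ Finset.univ, (e k.1 l : ℤ) := by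
      unfold deg; push_cast; rfl
    have hsplit := Finset.sum_filter_add_sum_filter_not Finset.univ
      (fun l => succeq e s l j.1) (fun l => (e k.1 l : ℤ))
    by_cases hkj : k = j
    · subst hkj
      rw [if_pos rfl]
      have hsingle : (∑ l ∈ Finset.univ.filter (fun l => ¬ succeq e s l k.1), (e k.1 l : ℤ))
          = (e k.1 (p k) : ℤ) := by
        apply Finset.sum_eq_single_of_mem
        · simp only [Finset.mem_filter, Finset.mem_univ, true_and]; exact hnotp
        · intro l hl hlp
          simp only [Finset.mem_filter, Finset.mem_univ, true_and] at hl
          by_contra hne0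
          have hpos : 0 < e k.1 l := Nat.pos_of_ne_zero (Nat.cast_ne_zero.mp hne0)
          have hlk : k.1 ≠ l := by rintro rfl; exact hl hjj
          have hadj : (graph e).Adj k.1 l := ⟨hlk, Or.inl hpos⟩
          exact hl (L3 l hadj hlp)
      omega
    · have hkj' : k.1 ≠ j.1 := fun h => hkj (Subtype.ext h)
      rw [if_neg hkj, if_neg (fun (h : (k : V) = p j) => hnotp (h ▸ hk))]
      have hzero : (∑ l ∈ Finset.univ.filter (fun l => ¬ succeq e s l j.1), (e k.1 l : ℤ))
          = 0 := by
        apply Finset.sum_eq_zero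
        intro l hl
        simp only [Finset.mem_filter, Finset.mem_univ, true_and] at hl
        by_contra hne0
        have hpos : 0 < e k.1 l := Nat.pos_of_ne_zero (Nat.cast_ne_zero.mp hne0)
        have hlk : k.1 ≠ l := by rintro rfl; exact hl hk
        have hadj : (graph e).Adj k.1 l := ⟨hlk, Or.inl hpos⟩
        exact hl (L4 k.1 l hk hkj' hadj)
      omega
  · rw [if_neg (fun h => hk ((hmem k).1 h))]
    have hkj : k ≠ j := fun h => hk (by rw [h]; exact hjj)
    rw [if_neg hkj]
    by_cases hkp : (k : V) = p j
    · rw [if_pos hkp]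
      have hsingle : (∑ l ∈ Finset.univ.filter (fun l => succeq e s l j.1), (e l k.1 : ℤ))
          = (e j.1 (p j) : ℤ) := by
        rw [← hkp]
        apply Finset.sum_eq_single_of_mem
        · simp only [Finset.mem_filter, Finset.mem_univ, true_and]; exact hjj
        · intro l hl hlj
          simp only [Finset.mem_filter, Finset.mem_univ, true_and] at hl
          by_contra hne0
          have hpos : 0 < e l k.1 := Nat.pos_of_ne_zero (Nat.cast_ne_zero.mp hne0)
          exact hlj ((key l k.1 hl hk hpos).1)
      omega
    · rw [if_neg hkp]
      have hzero : (∑ l ∈ Finset.univ.filter (fun l => succeq e s l j.1), (e l k.1 : ℤ))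
          = 0 := by
        apply Finset.sum_eq_zero
        intro l hl
        simp only [Finset.mem_filter, Finset.mem_univ, true_and] at hl
        by_contra hne0
        have hpos : 0 < e l k.1 := Nat.pos_of_ne_zero (Nat.cast_ne_zero.mp hne0)
        exact hkp ((key l k.1 hl hk hpos).2)
      omega


end SandpilePaper
end

section
/- Let T be a thick tree with loops with sink s, let u be a stable configuration, and let β ∈ ℕ^{V₀} be given by β_j = e_{j,s}. In any toppling sequence stabilizing u + β, no vertex topples before its parent: if j ∈ V₀ has p(j) ≠ s and j topples at some step, then p(j) toppled at an earlier step. -/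
namespace SandpilePaper

variable {V : Type*} [Fintype V] [DecidableEq V]

section TreeLemmas

open SimpleGraph

variable {W : Type*} [DecidableEq W] {G : SimpleGraph W}

lemma tree_path_length (h : G.IsTree) {u v : W} (p : G.Walk u v) (hp : p.IsPath) :
    p.length = G.dist u v := by
  obtain ⟨q, hq, hlen⟩ := h.isConnected.exists_path_of_dist u v
  rw [← hlen]
  exact congrArg SimpleGraph.Walk.length ((h.existsUnique_path u v).unique hp hq)

lemma tree_mem_support_dist (h : G.IsTree) {u v x : W} (p : G.Walk u v) (hp : p.IsPath)
    (hx : x ∈ p.support) : G.dist u v = G.dist u x + G.dist x v := by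
  have h1 := tree_path_length h _ (hp.takeUntil hx)
  have h2 := tree_path_length h _ (hp.dropUntil hx)
  have h3 := congrArg SimpleGraph.Walk.length (p.take_spec hx)
  rw [SimpleGraph.Walk.length_append] at h3
  rw [← tree_path_length h p hp, ← h3, h1, h2]

lemma tree_parent_unique (h : G.IsTree) {v s x y : W} (hx : G.Adj v x) (hy : G.Adj v y)
    (hdx : G.dist x s + 1 = G.dist v s) (hdy : G.dist y s + 1 = G.dist v s) : x = y := by
  obtain ⟨px, hpx, hlx⟩ := h.isConnected.exists_path_of_dist x s
  obtain ⟨py, hpy, hly⟩ := h.isConnected.exists_path_of_dist y s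
  have hvx : v ∉ px.support := by
    intro hmem
    have hsplit := tree_mem_support_dist h px hpx hmem
    omega
  have hvy : v ∉ py.support := by
    intro hmem
    have hsplit := tree_mem_support_dist h py hpy hmem
    omega
  have hWx : (SimpleGraph.Walk.cons hx px).IsPath :=
    (SimpleGraph.Walk.cons_isPath_iff _ _).mpr ⟨hpx, hvx⟩
  have hWy : (SimpleGraph.Walk.cons hy py).IsPath :=
    (SimpleGraph.Walk.cons_isPath_iff _ _).mpr ⟨hpy, hvy⟩
  have heq := (h.existsUnique_path v s).unique hWx hWy
  have := congrArg (fun w => SimpleGraph.Walk.getVert w 1) heq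
  simpa [SimpleGraph.Walk.getVert_cons_succ, SimpleGraph.Walk.getVert_zero] using this

lemma tree_adj_dist (h : G.IsTree) {v w : W} (s : W) (hadj : G.Adj v w) :
    G.dist v s + 1 = G.dist w s ∨ G.dist w s + 1 = G.dist v s := by
  have hd1 : G.dist v w = 1 := SimpleGraph.dist_eq_one_iff_adj.mpr hadj
  have hd1' : G.dist w v = 1 := SimpleGraph.dist_eq_one_iff_adj.mpr hadj.symm
  have t1 : G.dist v s ≤ G.dist v w + G.dist w s := h.isConnected.dist_triangle
  have t2 : G.dist w s ≤ G.dist w v + G.dist v s := h.isConnected.dist_triangle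
  have hne : G.dist v s ≠ G.dist w s := by
    intro heq
    obtain ⟨p, hp, hl⟩ := h.isConnected.exists_path_of_dist w s
    by_cases hv : v ∈ p.support
    · have hsplit := tree_mem_support_dist h p hp hv
      have hwv : G.dist w v ≠ 0 :=
        SimpleGraph.dist_ne_zero_iff_ne_and_reachable.mpr ⟨hadj.ne', hadj.symm.reachable⟩
      omega
    · have hW : (SimpleGraph.Walk.cons hadj p).IsPath :=
        (SimpleGraph.Walk.cons_isPath_iff _ _).mpr ⟨hp, hv⟩
      have := tree_path_length h _ hW
      simp only [SimpleGraph.Walk.length_cons] at this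
      omega
  omega

end TreeLemmas

section ListLemmas

variable {α : Type*}

lemma mem_take_idx {L : List α} {n : ℕ} {a : α} (h : a ∈ L.take n) :
    ∃ m, ∃ hm : m < L.length, m < n ∧ L.get ⟨m, hm⟩ = a := by
  rw [List.mem_take_iff_getElem] at h
  obtain ⟨i, hi, hia⟩ := h
  exact ⟨i, lt_of_lt_of_le hi (min_le_right _ _), lt_of_lt_of_le hi (min_le_left _ _), hia⟩

lemma idx_mem_take {L : List α} {n m : ℕ} (hm : m < L.length) (hmn : m < n) :
    L.get ⟨m, hm⟩ ∈ L.take n := by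
  rw [List.mem_take_iff_getElem]
  exact ⟨m, lt_min hmn hm, rfl⟩

end ListLemmas

section SandpileLemmas

variable (e : V → V → ℕ) (s : V)

lemma self_le_deg (v : V) : e v v ≤ deg e v :=
  Finset.single_le_sum (fun i _ => Nat.zero_le _) (Finset.mem_univ v)

lemma applySeq_mono (v : {i : V // i ≠ s}) :
    ∀ (M : List {i : V // i ≠ s}) (w : Conf s), ValidSeq e s w M →
      (∀ i ∈ M, i = v ∨ e i.1 v.1 = 0) → applySeq e s w M v ≤ w v := by
  intro M
  induction M with
  | nil => intro w _ _; exact le_refl _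
  | cons i M ih =>
    intro w hval hall
    obtain ⟨hdeg, hval'⟩ := hval
    have hstep : toppleAt e s i w v ≤ w v := by
      unfold toppleAt
      by_cases hiv : v = i
      · subst hiv
        rw [if_pos rfl]
        have := self_le_deg e v.1
        omega
      · rw [if_neg hiv]
        rcases hall i List.mem_cons_self with h | h
        · exact absurd h.symm hiv
        · simp [h]
    calc applySeq e s (toppleAt e s i w) M v ≤ toppleAt e s i w v :=
          ih _ hval' (fun j hj => hall j (List.mem_cons_of_mem _ hj))
      _ ≤ w v := hstep

lemma validSeq_take :
    ∀ (M : List {i : V // i ≠ s}) (w : Conf s) (n : ℕ), ValidSeq e s w M →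
      ValidSeq e s w (M.take n) := by
  intro M
  induction M with
  | nil => intro w n _; simp [ValidSeq]
  | cons i M ih =>
    intro w n hval
    cases n with
    | zero => trivial
    | succ n => exact ⟨hval.1, ih _ n hval.2⟩

lemma validSeq_unstable :
    ∀ (M : List {i : V // i ≠ s}) (w : Conf s), ValidSeq e s w M →
      ∀ (k : ℕ) (hk : k < M.length),
        deg e (M.get ⟨k, hk⟩).1 ≤ applySeq e s w (M.take k) (M.get ⟨k, hk⟩) := by
  intro M
  induction M with
  | nil => intro w _ k hk; simp at hk
  | cons i M ih =>
    intro w hval k hk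
    cases k with
    | zero => exact hval.1
    | succ k =>
      have := ih (toppleAt e s i w) hval.2 k (by simpa using Nat.lt_of_succ_lt_succ hk)
      simpa [applySeq] using this

lemma adj_of_e_pos {v w : V} (hne : v ≠ w) (hpos : 0 < e v w) : (graph e).Adj v w := by
  simp only [graph, SimpleGraph.fromRel_adj]
  exact ⟨hne, Or.inl hpos⟩

lemma e_sink_zero (htree : (graph e).IsTree) (p : {i : V // i ≠ s} → V)
    (hp : IsParent e s p) (v : {i : V // i ≠ s}) (hps : p v ≠ s) : e v.1 s = 0 := by
  by_contra h
  have hadj : (graph e).Adj v.1 s := adj_of_e_pos e v.2 (Nat.pos_of_ne_zero h)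
  have hd : (graph e).dist v.1 s = 1 := SimpleGraph.dist_eq_one_iff_adj.mpr hadj
  have hpd := (hp v).2
  rw [hd] at hpd
  have : (graph e).dist (p v) s = 0 := by omega
  exact hps ((htree.isConnected.dist_eq_zero_iff).mp this)

lemma main_aux (hsym : ∀ i j : V, e i j = e j i)
    (htree : (graph e).IsTree)
    (p : {i : V // i ≠ s} → V) (hp : IsParent e s p)
    (u : Conf s) (hu : Stable e s u)
    (L : List {i : V // i ≠ s})
    (hL : ValidSeq e s (u + fun j => e j.1 s) L) :
    ∀ (k : ℕ) (hk : k < L.length) (hps : p (L.get ⟨k, hk⟩) ≠ s),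
      (⟨p (L.get ⟨k, hk⟩), hps⟩ : {i : V // i ≠ s}) ∈ L.take k := by
  classical
  set u0 : Conf s := u + fun j => e j.1 s with hu0
  intro k
  induction k using Nat.strong_induction_on with
  | _ k IH =>
    intro hk hps
    set v := L.get ⟨k, hk⟩ with hv
    have hex0 : ∃ m, ∃ h : m < L.length, L.get ⟨m, h⟩ = v := ⟨k, hk, rfl⟩
    set k0 := Nat.find hex0 with hk0def
    obtain ⟨hk0len, hk0v⟩ := Nat.find_spec hex0
    have hk0le : k0 ≤ k := Nat.find_le ⟨hk, rfl⟩
    have hmin : ∀ m, m < k0 → ∀ h : m < L.length, L.get ⟨m, h⟩ ≠ v :=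
      fun m hm h hcontra => Nat.find_min hex0 hm ⟨h, hcontra⟩
    have hunst : deg e v.1 ≤ applySeq e s u0 (L.take k0) v := by
      have := validSeq_unstable e s L u0 hL k0 hk0len
      rwa [hk0v] at this
    by_cases hex : ∃ m, ∃ hm : m < L.length, m < k0 ∧ 0 < e (L.get ⟨m, hm⟩).1 v.1 ∧
        L.get ⟨m, hm⟩ ≠ v
    · obtain ⟨m, hmlen, hmk0, hpos, hne⟩ := hex
      set w := L.get ⟨m, hmlen⟩ with hw
      have hwv : (graph e).Adj w.1 v.1 :=
        adj_of_e_pos e (fun h => hne (Subtype.ext h)) hpos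
      rcases tree_adj_dist htree s hwv with hcase | hcase
      · -- dist w s + 1 = dist v s : w is the parent of v
        have hpv : w.1 = p v :=
          tree_parent_unique htree hwv.symm (hp v).1 hcase (hp v).2
        have heq : (⟨p v, hps⟩ : {i : V // i ≠ s}) = w := Subtype.ext hpv.symm
        rw [heq, hw]
        exact idx_mem_take hmlen (lt_of_lt_of_le hmk0 hk0le)
      · -- dist v s + 1 = dist w s : v is the parent of w
        have hpw : v.1 = p w :=
          tree_parent_unique htree hwv (hp w).1 hcase (hp w).2
        have hpws : p w ≠ s := by rw [← hpw]; exact v.2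
        have hIH := IH m (lt_of_lt_of_le hmk0 hk0le) hmlen hpws
        have hvw : (⟨p (L.get ⟨m, hmlen⟩), hpws⟩ : {i : V // i ≠ s}) = v :=
          Subtype.ext hpw.symm
        rw [hvw] at hIH
        obtain ⟨m', hm'len, hm'm, hm'v⟩ := mem_take_idx hIH
        exact absurd hm'v (hmin m' (lt_trans hm'm hmk0) hm'len)
    · push_neg at hex
      have hall : ∀ i ∈ L.take k0, i = v ∨ e i.1 v.1 = 0 := by
        intro i hi
        obtain ⟨m, hmlen, hmk0, hmi⟩ := mem_take_idx hi
        by_cases hiv : i = v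
        · exact Or.inl hiv
        · right
          by_contra hpos
          have := hex m hmlen hmk0 (by rw [hmi]; exact Nat.pos_of_ne_zero hpos)
          rw [hmi] at this
          exact hiv this
      have hmono := applySeq_mono e s v (L.take k0) u0
        (validSeq_take e s L u0 k0 hL) hall
      have hzero : e v.1 s = 0 := e_sink_zero e s htree p hp v hps
      have hu0v : u0 v = u v := by
        simp [hu0, Pi.add_apply, hzero]
      have := hu v
      omega

end SandpileLemmas

theorem stmt_13 (e : V → V → ℕ) (s : V) (hsym : ∀ i j : V, e i j = e j i)
    (htree : (graph e).IsTree)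
    (p : {i : V // i ≠ s} → V) (hp : IsParent e s p)
    (u : Conf s) (hu : Stable e s u)
    (L : List {i : V // i ≠ s})
    (hL : ValidSeq e s (u + fun j => e j.1 s) L)
    (hstab : Stable e s (applySeq e s (u + fun j => e j.1 s) L))
    (k : ℕ) (hk : k < L.length) (hps : p (L.get ⟨k, hk⟩) ≠ s) :
    (⟨p (L.get ⟨k, hk⟩), hps⟩ : {i : V // i ≠ s}) ∈ L.take k :=
  main_aux e s hsym htree p hp u hu L hL k hk hps

end SandpilePaper
end
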